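/- arXiv:1106.3474 — 7 statements merged into one kernel-verified Lean document; each statement's English description precedes it below -/
import Mathlib

section
/- For any positive integer q and any integer a, the number η_a(q) of pairs (α,β) with 1 ≤ α,β ≤ q and α² + β² ≡ a (mod q) satisfies η_a(q) ≪ q·τ(q). -/
open Finset

section Aux
variable {q : ℕ} [NeZero q]



variable {q : ℕ} [NeZero q]

lemma card_val_dvd (m : ℕ) (hm : m ∣ q) (hm0 : m ≠ 0) :
    (univ.filter fun x : ZMod q => m ∣ x.val).card = q / m := by
  have key : ∀ j < q / m, m * j < q := by
    intro j hj
    calc m * j < m * (q / m) := (Nat.mul_lt_mul_left (Nat.pos_of_ne_zero hm0)).2 hj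
    _ = q := Nat.mul_div_cancel' hm
  have h : (univ.filter fun x : ZMod q => m ∣ x.val).card = (range (q / m)).card := by
    refine Finset.card_nbij' (fun x => x.val / m) (fun j => ((m * j : ℕ) : ZMod q)) ?_ ?_ ?_ ?_
    · intro x hx
      exact mem_range.2 (Nat.div_lt_div_of_lt_of_dvd hm (ZMod.val_lt x))
    · intro j hj
      simp only [Finset.mem_coe, mem_filter, mem_univ, true_and]
      rw [ZMod.val_cast_of_lt (key j (mem_range.1 hj))]
      exact Dvd.intro j rfl
    · intro x hx
      simp only [Finset.mem_coe, mem_filter, mem_univ, true_and] at hx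
      show ((m * (x.val / m) : ℕ) : ZMod q) = x
      rw [Nat.mul_div_cancel' hx]
      exact ZMod.natCast_rightInverse x
    · intro j hj
      show (((m * j : ℕ) : ZMod q)).val / m = j
      rw [ZMod.val_cast_of_lt (key j (mem_range.1 hj)),
        Nat.mul_div_cancel_left _ (Nat.pos_of_ne_zero hm0)]
  simpa using h

lemma ker_two_card : (univ.filter fun d : ZMod q => d + d = 0).card ≤ 2 := by
  have hq0 : q ≠ 0 := NeZero.ne q
  have hsub : (univ.filter fun d : ZMod q => d + d = 0) ⊆ {0, ((q / 2 : ℕ) : ZMod q)} := by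
    intro d hd
    simp only [mem_filter, mem_univ, true_and] at hd
    have hv : (d + d).val = 0 := by rw [hd]; simp
    rw [ZMod.val_add] at hv
    have hdvd : q ∣ d.val + d.val := Nat.dvd_of_mod_eq_zero hv
    have hlt : d.val + d.val < 2 * q := by
      have := ZMod.val_lt d; omega
    rcases hdvd with ⟨c, hc⟩
    have hc2 : c = 0 ∨ c = 1 := by
      rcases Nat.lt_or_ge c 2 with h | h
      · omega
      · exfalso; have : 2 * q ≤ q * c := by nlinarith
        omega
    rcases hc2 with rfl | rfl
    · simp only [Nat.mul_zero] at hc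
      have : d.val = 0 := by omega
      simp [mem_insert, (ZMod.val_eq_zero d).1 this]
    · have : d.val = q / 2 := by omega
      have hd' : d = ((d.val : ℕ) : ZMod q) := (ZMod.natCast_rightInverse d).symm
      rw [mem_insert, mem_singleton]
      right
      rw [hd', this]
  calc (univ.filter fun d : ZMod q => d + d = 0).card ≤ ({0, ((q / 2 : ℕ) : ZMod q)} : Finset (ZMod q)).card :=
        card_le_card hsub
    _ ≤ 2 := card_insert_le _ _ |>.trans (by simp)



lemma zero_pairs_card :
    ((univ : Finset (ZMod q × ZMod q)).filter fun p => p.1 * p.2 = 0).card ≤ q.divisors.card * q := by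
  have hq0 : q ≠ 0 := NeZero.ne q
  set Z := ((univ : Finset (ZMod q × ZMod q)).filter fun p => p.1 * p.2 = 0) with hZ
  have hsub : Z ⊆ q.divisors.biUnion (fun d =>
      (univ.filter fun x : ZMod q => d ∣ x.val) ×ˢ (univ.filter fun y : ZMod q => (q / d) ∣ y.val)) := by
    intro p hp
    simp only [hZ, mem_filter, mem_univ, true_and] at hp
    have hv : p.1.val * p.2.val % q = 0 := by
      rw [← ZMod.val_mul, hp]; simp
    have hdvd : q ∣ p.1.val * p.2.val := Nat.dvd_of_mod_eq_zero hv
    set d := Nat.gcd p.1.val q with hd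
    have hdq : d ∣ q := Nat.gcd_dvd_right _ _
    have hd0 : d ≠ 0 := fun h => hq0 (Nat.eq_zero_of_gcd_eq_zero_right h)
    refine mem_biUnion.2 ⟨d, Nat.mem_divisors.2 ⟨hdq, hq0⟩, ?_⟩
    rw [mem_product]
    constructor
    · simp only [mem_filter, mem_univ, true_and]
      exact Nat.gcd_dvd_left _ _
    · simp only [mem_filter, mem_univ, true_and]
      -- q/d ∣ p.2.val
      have hcop : Nat.Coprime (p.1.val / d) (q / d) :=
        Nat.coprime_div_gcd_div_gcd (Nat.pos_of_ne_zero hd0)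
      have h1 : q / d ∣ (p.1.val / d) * p.2.val := by
        have : d * (q / d) ∣ d * ((p.1.val / d) * p.2.val) := by
          rw [Nat.mul_div_cancel' hdq, ← Nat.mul_assoc, Nat.mul_div_cancel' (Nat.gcd_dvd_left _ _)]
          exact hdvd
        exact (Nat.mul_dvd_mul_iff_left (Nat.pos_of_ne_zero hd0)).1 this
      exact (Nat.Coprime.dvd_of_dvd_mul_left hcop.symm h1)
  calc Z.card ≤ _ := card_le_card hsub
    _ ≤ ∑ d ∈ q.divisors, ((univ.filter fun x : ZMod q => d ∣ x.val) ×ˢ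
          (univ.filter fun y : ZMod q => (q / d) ∣ y.val)).card := card_biUnion_le
    _ ≤ ∑ _d ∈ q.divisors, q := by
      refine Finset.sum_le_sum ?_
      intro d hd
      rw [Nat.mem_divisors] at hd
      have hd0 : d ≠ 0 := by
        rintro rfl; exact hq0 (Nat.eq_zero_of_zero_dvd hd.1)
      have hqd0 : q / d ≠ 0 := by
        have := Nat.div_pos (Nat.le_of_dvd (Nat.pos_of_ne_zero hq0) hd.1) (Nat.pos_of_ne_zero hd0)
        omega
      rw [card_product, card_val_dvd d hd.1 hd0, card_val_dvd (q / d) (Nat.div_dvd_of_dvd hd.1) hqd0,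
        Nat.div_div_self hd.1 hq0, Nat.div_mul_cancel hd.1]
    _ = q.divisors.card * q := by rw [Finset.sum_const, smul_eq_mul]


lemma sq_pairs_card :
    ((univ : Finset (ZMod q × ZMod q)).filter fun p => p.1 ^ 2 = p.2 ^ 2).card ≤
      2 * ((univ : Finset (ZMod q × ZMod q)).filter fun p => p.1 * p.2 = 0).card := by
  classical
  set B := ((univ : Finset (ZMod q × ZMod q)).filter fun p => p.1 ^ 2 = p.2 ^ 2) with hB
  set f : ZMod q × ZMod q → ZMod q × ZMod q := fun p => (p.1 - p.2, p.1 + p.2) with hf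
  have himg : B.image f ⊆ (univ : Finset (ZMod q × ZMod q)).filter fun p => p.1 * p.2 = 0 := by
    intro b hb
    rcases Finset.mem_image.1 hb with ⟨p, hp, rfl⟩
    simp only [hB, mem_filter, mem_univ, true_and] at hp ⊢
    have : (p.1 - p.2) * (p.1 + p.2) = p.1 ^ 2 - p.2 ^ 2 := by ring
    rw [this, hp, sub_self]
  have hfiber : ∀ b ∈ B.image f, (B.filter fun p => f p = b).card ≤ 2 := by
    intro b _
    rcases (B.filter fun p => f p = b).eq_empty_or_nonempty with he | ⟨p0, hp0⟩
    · rw [he]; simp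
    · have hp0' := mem_filter.1 hp0
      have hcard : (B.filter fun p => f p = b).card ≤
          (univ.filter fun d : ZMod q => d + d = 0).card := by
        refine Finset.card_le_card_of_injOn (fun p => p.1 - p0.1) ?_ ?_
        · intro p hp
          have hp' := mem_filter.1 hp
          simp only [Finset.mem_coe, mem_filter, mem_univ, true_and]
          have h1 : f p = f p0 := hp'.2.trans hp0'.2.symm
          have h2 : p.1 - p.2 = p0.1 - p0.2 := congrArg Prod.fst h1
          have h3 : p.1 + p.2 = p0.1 + p0.2 := congrArg Prod.snd h1
          have : p.1 + p.1 = p0.1 + p0.1 := by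
            have := congrArg₂ (· + ·) h2 h3
            try simp only at this
            abel_nf at this ⊢
            linear_combination this
          linear_combination this
        · intro p hp p' hp' hpp
          simp only at hpp
          have h1 : p.1 = p'.1 := by linear_combination hpp
          have hfp : f p = f p' := by
            rw [(mem_filter.1 hp).2, (mem_filter.1 hp').2]
          have h2 : p.1 - p.2 = p'.1 - p'.2 := congrArg Prod.fst hfp
          have h3 : p.2 = p'.2 := by linear_combination h1 - h2
          exact Prod.ext h1 h3
      exact hcard.trans ker_two_card
  calc B.card ≤ 2 * (B.image f).card := Finset.card_le_mul_card_image B 2 hfiber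
    _ ≤ 2 * _ := by
      exact Nat.mul_le_mul_left 2 (card_le_card himg)


lemma sum_pairs_le (b : ZMod q) :
    ((univ : Finset (ZMod q × ZMod q)).filter fun p => p.1 ^ 2 + p.2 ^ 2 = b).card ≤
      ((univ : Finset (ZMod q × ZMod q)).filter fun p => p.1 ^ 2 = p.2 ^ 2).card := by
  classical
  set ρ : ZMod q → ℕ := fun c => (univ.filter fun x : ZMod q => x ^ 2 = c).card with hρ
  set I : Finset (ZMod q) := univ.image (fun x : ZMod q => x ^ 2) with hI
  have hρ0 : ∀ c, c ∉ I → ρ c = 0 := by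
    intro c hc
    rw [hρ]
    simp only [Finset.card_eq_zero]
    rw [Finset.filter_eq_empty_iff]
    intro x _
    exact fun h => hc (Finset.mem_image.2 ⟨x, mem_univ x, h⟩)
  -- generic: for any g, card of pairs with p.1^2 + something
  have slice : ∀ (c : ZMod q) (x : ZMod q),
      ((univ : Finset (ZMod q × ZMod q)).filter (fun p => p.1 ^ 2 + p.2 ^ 2 = c) |>.filter
        fun p => p.1 = x).card = ρ (c - x ^ 2) := by
    intro c x
    refine Finset.card_nbij' (fun p => p.2) (fun y => (x, y)) ?_ ?_ ?_ ?_
    · intro p hp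
      simp only [Finset.mem_coe, mem_filter, mem_univ, true_and] at hp ⊢
      rcases hp with ⟨h1, h2⟩
      rw [← h2]
      linear_combination h1
    · intro y hy
      simp only [Finset.mem_coe, mem_filter, mem_univ, true_and] at hy ⊢
      exact ⟨by linear_combination hy, trivial⟩
    · intro p hp
      simp only [Finset.mem_coe, mem_filter, mem_univ, true_and] at hp
      exact (Prod.ext hp.2.symm rfl)
    · intro y _
      rfl
  have sliceB : ∀ x : ZMod q,
      (((univ : Finset (ZMod q × ZMod q)).filter fun p => p.1 ^ 2 = p.2 ^ 2).filter
        fun p => p.1 = x).card = ρ (x ^ 2) := by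
    intro x
    refine Finset.card_nbij' (fun p => p.2) (fun y => (x, y)) ?_ ?_ ?_ ?_
    · intro p hp
      simp only [Finset.mem_coe, mem_filter, mem_univ, true_and] at hp ⊢
      rw [← hp.2, ← hp.1]
    · intro y hy
      simp only [Finset.mem_coe, mem_filter, mem_univ, true_and] at hy ⊢
      exact ⟨hy.symm, trivial⟩
    · intro p hp
      simp only [Finset.mem_coe, mem_filter, mem_univ, true_and] at hp
      exact (Prod.ext hp.2.symm rfl)
    · intro y _
      rfl
  have hS : ((univ : Finset (ZMod q × ZMod q)).filter fun p => p.1 ^ 2 + p.2 ^ 2 = b).card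
      = ∑ c ∈ I, ρ c * ρ (b - c) := by
    rw [Finset.card_eq_sum_card_fiberwise
      (f := Prod.fst) (t := (univ : Finset (ZMod q))) (fun x _ => mem_univ _)]
    calc ∑ x : ZMod q, _ = ∑ x : ZMod q, ρ (b - x ^ 2) :=
          Finset.sum_congr rfl (fun x _ => slice b x)
      _ = ∑ c ∈ I, ((univ.filter fun x : ZMod q => x ^ 2 = c).card) • ρ (b - c) :=
          Finset.sum_comp (fun c => ρ (b - c)) (fun x : ZMod q => x ^ 2)
      _ = ∑ c ∈ I, ρ c * ρ (b - c) := by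
          refine Finset.sum_congr rfl (fun c _ => ?_)
          rw [smul_eq_mul, hρ]
  have hB : ((univ : Finset (ZMod q × ZMod q)).filter fun p => p.1 ^ 2 = p.2 ^ 2).card
      = ∑ c ∈ I, ρ c * ρ c := by
    rw [Finset.card_eq_sum_card_fiberwise
      (f := Prod.fst) (t := (univ : Finset (ZMod q))) (fun x _ => mem_univ _)]
    calc ∑ x : ZMod q, _ = ∑ x : ZMod q, ρ (x ^ 2) :=
          Finset.sum_congr rfl (fun x _ => sliceB x)
      _ = ∑ c ∈ I, ((univ.filter fun x : ZMod q => x ^ 2 = c).card) • ρ c :=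
          Finset.sum_comp ρ (fun x : ZMod q => x ^ 2)
      _ = ∑ c ∈ I, ρ c * ρ c := by
          refine Finset.sum_congr rfl (fun c _ => ?_)
          rw [smul_eq_mul, hρ]
  rw [hS, hB]
  -- extend to univ
  have hext1 : ∑ c ∈ I, ρ c * ρ (b - c) = ∑ c : ZMod q, ρ c * ρ (b - c) :=
    Finset.sum_subset (subset_univ I) (fun c _ hc => by rw [hρ0 c hc, Nat.zero_mul])
  have hext2 : ∑ c ∈ I, ρ c * ρ c = ∑ c : ZMod q, ρ c * ρ c :=
    Finset.sum_subset (subset_univ I) (fun c _ hc => by rw [hρ0 c hc, Nat.zero_mul])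
  rw [hext1, hext2]
  -- Cauchy-Schwarz
  have key : ∀ m n : ℕ, 2 * (m * n) ≤ m * m + n * n := by
    intro m n
    have h : (2 * (m * n) : ℤ) ≤ (m : ℤ) * m + n * n := by nlinarith [sq_nonneg ((m : ℤ) - n)]
    exact_mod_cast h
  have hre : ∑ c : ZMod q, ρ (b - c) * ρ (b - c) = ∑ c : ZMod q, ρ c * ρ c :=
    Fintype.sum_equiv (Equiv.subLeft b) (fun c => ρ (b - c) * ρ (b - c))
      (fun c => ρ c * ρ c) (fun x => by simp [Equiv.subLeft])
  have h2 : 2 * ∑ c : ZMod q, ρ c * ρ (b - c) ≤ 2 * ∑ c : ZMod q, ρ c * ρ c := by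
    calc 2 * ∑ c : ZMod q, ρ c * ρ (b - c) = ∑ c : ZMod q, 2 * (ρ c * ρ (b - c)) := by
          rw [Finset.mul_sum]
      _ ≤ ∑ c : ZMod q, (ρ c * ρ c + ρ (b - c) * ρ (b - c)) :=
          Finset.sum_le_sum (fun c _ => key _ _)
      _ = ∑ c : ZMod q, ρ c * ρ c + ∑ c : ZMod q, ρ (b - c) * ρ (b - c) :=
          Finset.sum_add_distrib
      _ = 2 * ∑ c : ZMod q, ρ c * ρ c := by rw [hre, two_mul]
  exact Nat.le_of_mul_le_mul_left h2 (by norm_num)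


lemma card_translate (hq : 0 < q) (a : ℤ) :
    ((((Finset.Icc 1 q) ×ˢ (Finset.Icc 1 q)).filter
        (fun p : ℕ × ℕ => ((p.1 : ℤ)^2 + (p.2 : ℤ)^2) % q = a % q)).card : ℕ) =
      ((univ : Finset (ZMod q × ZMod q)).filter
        fun p => p.1 ^ 2 + p.2 ^ 2 = ((a : ℤ) : ZMod q)).card := by
  classical
  have cast_inj : ∀ m ∈ Finset.Icc 1 q, ∀ n ∈ Finset.Icc 1 q,
      (m : ZMod q) = (n : ZMod q) → m = n := by
    intro m hm n hn h
    rw [Finset.mem_Icc] at hm hn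
    have hmod : m % q = n % q := (ZMod.natCast_eq_natCast_iff m n q).1 h
    have hm' : m % q = m ∨ (m = q ∧ m % q = 0) := by
      rcases lt_or_eq_of_le hm.2 with h' | h'
      · exact Or.inl (Nat.mod_eq_of_lt h')
      · exact Or.inr ⟨h', by rw [h']; exact Nat.mod_self q⟩
    have hn' : n % q = n ∨ (n = q ∧ n % q = 0) := by
      rcases lt_or_eq_of_le hn.2 with h' | h'
      · exact Or.inl (Nat.mod_eq_of_lt h')
      · exact Or.inr ⟨h', by rw [h']; exact Nat.mod_self q⟩
    omega
  have cast_surj : ∀ z : ZMod q, ∃ n, n ∈ Finset.Icc 1 q ∧ (n : ZMod q) = z := by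
    intro z
    by_cases hz : z = 0
    · exact ⟨q, Finset.mem_Icc.2 ⟨hq, le_refl q⟩, by rw [hz]; exact ZMod.natCast_self q⟩
    · refine ⟨z.val, Finset.mem_Icc.2 ⟨?_, le_of_lt (ZMod.val_lt z)⟩, ZMod.natCast_rightInverse z⟩
      have : z.val ≠ 0 := fun h => hz ((ZMod.val_eq_zero z).1 h)
      omega
  have cond_iff : ∀ m n : ℕ,
      ((((m : ℤ))^2 + ((n : ℤ))^2) % q = a % q) ↔
      ((m : ZMod q) ^ 2 + (n : ZMod q) ^ 2 = ((a : ℤ) : ZMod q)) := by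
    intro m n
    constructor
    · intro h
      have h' : ((((m : ℤ))^2 + ((n : ℤ))^2 : ℤ) : ZMod q) = ((a : ℤ) : ZMod q) :=
        (ZMod.intCast_eq_intCast_iff _ _ _).2 h
      push_cast at h'
      exact h'
    · intro h
      have h' : ((((m : ℤ))^2 + ((n : ℤ))^2 : ℤ) : ZMod q) = ((a : ℤ) : ZMod q) := by
        push_cast
        exact h
      exact (ZMod.intCast_eq_intCast_iff _ _ _).1 h'
  refine Finset.card_bij (fun p _ => ((p.1 : ZMod q), (p.2 : ZMod q))) ?_ ?_ ?_
  · intro p hp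
    simp only [Finset.mem_filter, Finset.mem_product] at hp
    simp only [Finset.mem_filter, Finset.mem_univ, true_and]
    exact (cond_iff p.1 p.2).1 hp.2
  · intro p hp p' hp' h
    simp only [Finset.mem_filter, Finset.mem_product] at hp hp'
    have h1 := congrArg Prod.fst h
    have h2 := congrArg Prod.snd h
    simp only at h1 h2
    exact Prod.ext (cast_inj _ hp.1.1 _ hp'.1.1 h1) (cast_inj _ hp.1.2 _ hp'.1.2 h2)
  · intro z hz
    simp only [Finset.mem_filter, Finset.mem_univ, true_and] at hz
    obtain ⟨m, hm, hm'⟩ := cast_surj z.1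
    obtain ⟨n, hn, hn'⟩ := cast_surj z.2
    refine ⟨(m, n), ?_, ?_⟩
    · simp only [Finset.mem_filter, Finset.mem_product]
      refine ⟨⟨hm, hn⟩, (cond_iff m n).2 ?_⟩
      rw [hm', hn']
      exact hz
    · rw [Prod.ext_iff]
      exact ⟨hm', hn'⟩

end Aux

theorem eta_bound :
    ∃ C : ℝ, 0 < C ∧ ∀ (q : ℕ), 0 < q → ∀ (a : ℤ),
      ((((Finset.Icc 1 q) ×ˢ (Finset.Icc 1 q)).filter
          (fun p : ℕ × ℕ => ((p.1 : ℤ)^2 + (p.2 : ℤ)^2) % q = a % q)).card : ℝ) ≤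
        C * q * (q.divisors.card) := by
  refine ⟨2, by norm_num, ?_⟩
  intro q hq a
  haveI : NeZero q := ⟨hq.ne'⟩
  have h1 := card_translate (q := q) hq a
  have h2 := sum_pairs_le (q := q) ((a : ℤ) : ZMod q)
  have h3 := sq_pairs_card (q := q)
  have h4 := zero_pairs_card (q := q)
  have htot : ((((Finset.Icc 1 q) ×ˢ (Finset.Icc 1 q)).filter
      (fun p : ℕ × ℕ => ((p.1 : ℤ)^2 + (p.2 : ℤ)^2) % q = a % q)).card : ℕ) ≤
      2 * (q.divisors.card * q) := by
    calc _ = _ := h1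
      _ ≤ _ := h2
      _ ≤ _ := h3
      _ ≤ 2 * (q.divisors.card * q) := Nat.mul_le_mul_left 2 h4
  have := (Nat.cast_le (α := ℝ)).2 htot
  push_cast at this
  linarith
end

section
/- Let ν ≥ 2 and a, m, t be integers with m and t both even. Define B(2^ν; a, m, t) = Σ*_{l mod 2^ν} e(−al/2^ν)·S(2^ν; l, m)·S(2^ν; l, t), where the star denotes summation over l coprime to 2. Then B(2^ν; a, m, t) = 2^{ν+1}·K(2^ν; 2^{ν−2} − a, −(m²+t²)/4), where K is the Kloosterman sum. -/
noncomputable def e (t : ℝ) : ℂ := Complex.exp (2 * Real.pi * Complex.I * t)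

noncomputable def gaussS (q : ℕ) (k m : ℤ) : ℂ :=
  ∑ α ∈ Finset.range q, e (((k * (α : ℤ)^2 + m * (α : ℤ) : ℤ) : ℝ) / q)

/-- Kloosterman sum, written as a sum over pairs of inverse residues. -/
noncomputable def kloos (q : ℕ) (k n : ℤ) : ℂ :=
  ∑ p ∈ ((Finset.range q) ×ˢ (Finset.range q)).filter
      (fun p : ℕ × ℕ => ((p.1 : ℤ) * (p.2 : ℤ)) % q = 1 % (q : ℤ)),
    e (((k * (p.1 : ℤ) + n * (p.2 : ℤ) : ℤ) : ℝ) / q)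

noncomputable def E (q : ℕ) (a : ℤ) : ℂ := e ((a : ℝ) / q)

lemma E_add (q : ℕ) (a b : ℤ) : E q (a + b) = E q a * E q b := by
  simp only [E, e, ← Complex.exp_add]
  congr 1
  push_cast
  ring

lemma E_zero (q : ℕ) : E q 0 = 1 := by
  simp [E, e]

lemma E_int_mul (q : ℕ) (b : ℤ) : E q (q * b) = 1 := by
  rcases eq_or_ne q 0 with h | h
  · simp [h, E, e]
  · have : ((q * b : ℤ) : ℝ) / q = (b : ℝ) := by
      field_simp; push_cast; ring
    rw [E, this, e]
    have : 2 * (Real.pi : ℂ) * Complex.I * (b : ℝ) = (b : ℤ) * (2 * Real.pi * Complex.I) := by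
      push_cast; ring
    rw [this, Complex.exp_int_mul_two_pi_mul_I]

lemma E_congr {q : ℕ} {a b : ℤ} (h : a ≡ b [ZMOD (q : ℤ)]) : E q a = E q b := by
  obtain ⟨c, hc⟩ := h.symm.dvd
  have : a = b + q * c := by linarith
  rw [this, E_add, E_int_mul, mul_one]

lemma E_div (d q : ℕ) (a : ℤ) (hd : d ≠ 0) : E (d * q) (d * a) = E q a := by
  unfold E
  congr 1
  push_cast
  rw [mul_div_mul_left]
  exact_mod_cast hd

lemma E_two_odd (l : ℤ) (hl : ¬ (2 : ℤ) ∣ l) : E 2 l = -1 := by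
  have h1 : l % 2 = 1 := by omega
  have : E 2 l = E 2 1 := E_congr (by unfold Int.ModEq; omega)
  rw [this, E]
  have h2 : ((1 : ℤ) : ℝ) / (2 : ℕ) = (1/2 : ℝ) := by norm_num
  rw [h2, e]
  have : 2 * (Real.pi : ℂ) * Complex.I * ((1/2 : ℝ) : ℂ) = Real.pi * Complex.I := by
    push_cast; ring
  rw [this, Complex.exp_pi_mul_I]

open Finset

lemma sum_range_shift_one (M : ℕ) (f : ℕ → ℂ) (hf : ∀ i, f (i + M) = f i) :
    ∑ i ∈ range M, f (i + 1) = ∑ i ∈ range M, f i := by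
  have h1 := Finset.sum_range_succ' f M
  have h2 := Finset.sum_range_succ f M
  have h3 : f M = f 0 := by simpa using hf 0
  rw [h2, h3] at h1
  exact (add_right_cancel h1).symm


lemma sum_range_shift (M : ℕ) (f : ℕ → ℂ) (hf : ∀ i, f (i + M) = f i) (c : ℕ) :
    ∑ i ∈ range M, f (i + c) = ∑ i ∈ range M, f i := by
  induction c with
  | zero => simp
  | succ n ih =>
    have : ∑ i ∈ range M, f (i + (n + 1)) = ∑ i ∈ range M, (fun j => f (j + n)) (i + 1) := by
      apply Finset.sum_congr rfl; intro i _; congr 1; omega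
    rw [this, sum_range_shift_one M (fun j => f (j + n)) (fun i => by
      have : i + M + n = i + n + M := by omega
      rw [this, hf]), ih]

lemma sum_range_double (M : ℕ) (f : ℕ → ℂ) (hf : ∀ i, f (i + M) = f i) :
    ∑ i ∈ range (2 * M), f i = 2 * ∑ i ∈ range M, f i := by
  have h : 2 * M = M + M := by omega
  rw [h, Finset.sum_range_add]
  have : ∑ i ∈ range M, f (M + i) = ∑ i ∈ range M, f i := by
    apply Finset.sum_congr rfl <;> intro i _
    rw [add_comm, hf]
  rw [this]; ring

lemma sum_range_two_mul (M : ℕ) (f : ℕ → ℂ) :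
    ∑ i ∈ range (2 * M), f i = ∑ i ∈ range M, (f (2 * i) + f (2 * i + 1)) := by
  induction M with
  | zero => simp
  | succ n ih =>
    have : 2 * (n + 1) = (2 * n) + 1 + 1 := by omega
    rw [this, Finset.sum_range_succ, Finset.sum_range_succ, ih, Finset.sum_range_succ]
    ring

noncomputable def gg (q : ℕ) (l : ℤ) : ℂ := ∑ α ∈ range q, E q (l * (α : ℤ)^2)

lemma gg_rec (j : ℕ) (l : ℤ) (hl : ¬ (2 : ℤ) ∣ l) :
    gg (2^(j+4)) l = 2 * gg (2^(j+2)) l := by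
  have h2m : (2:ℕ)^(j+4) = 2 * 2^(j+3) := by ring
  unfold gg
  rw [h2m, sum_range_two_mul, Finset.sum_add_distrib]
  -- even part
  have heven : ∀ δ : ℕ, E (2 * 2^(j+3)) (l * ((2*δ : ℕ) : ℤ)^2) = E (2^(j+2)) (l * (δ:ℤ)^2) := by
    intro δ
    have h1 : (2:ℕ) * 2^(j+3) = 4 * 2^(j+2) := by ring
    have h2 : (l * ((2*δ : ℕ) : ℤ)^2) = ((4:ℕ):ℤ) * (l * (δ:ℤ)^2) := by push_cast; ring
    rw [h1, h2, E_div _ _ _ (by norm_num)]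
  have hEsum : ∑ δ ∈ range (2^(j+3)), E (2 * 2^(j+3)) (l * ((2*δ : ℕ) : ℤ)^2)
      = 2 * ∑ δ ∈ range (2^(j+2)), E (2^(j+2)) (l * (δ:ℤ)^2) := by
    rw [Finset.sum_congr rfl (fun δ _ => heven δ)]
    have h3 : (2:ℕ)^(j+3) = 2 * 2^(j+2) := by ring
    rw [h3, sum_range_double]
    intro i
    apply E_congr
    rw [Int.ModEq]
    have : ((i + 2^(j+2) : ℕ) : ℤ) = (i:ℤ) + 2^(j+2) := by push_cast; ring
    rw [this]
    have : l * ((i:ℤ) + 2^(j+2))^2 = l * (i:ℤ)^2 + 2^(j+2) * (l * (2*i + 2^(j+2))) := by ring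
    rw [this]
    push_cast
    rw [Int.add_mul_emod_self_left]
  -- odd part
  have hodd : ∑ δ ∈ range (2^(j+3)), E (2 * 2^(j+3)) (l * ((2*δ+1 : ℕ) : ℤ)^2) = 0 := by
    set M : ℕ := 2^(j+3) with hM
    set h : ℕ → ℂ := fun δ => E (2 * M) (l * ((2*δ+1 : ℕ) : ℤ)^2) with hh
    have hper : ∀ i, h (i + M) = h i := by
      intro i
      apply E_congr
      rw [Int.ModEq]
      have : ((2*(i+M)+1 : ℕ) : ℤ) = ((2*i+1 : ℕ) : ℤ) + 2*M := by push_cast; ring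
      rw [this]
      have : l * (((2*i+1 : ℕ) : ℤ) + 2*M)^2
          = l * ((2*i+1 : ℕ) : ℤ)^2 + (2*M) * (l * (2*((2*i+1:ℕ):ℤ) + 2*M)) := by ring
      rw [this]
      push_cast
      rw [Int.add_mul_emod_self_left]
    have hneg : ∀ i, h (i + 2^(j+1)) = - h i := by
      intro i
      have step1 : h (i + 2^(j+1)) = E (2*M) (l * ((2*i+1 : ℕ) : ℤ)^2 + 2^(j+3) * l) := by
        apply E_congr
        rw [Int.ModEq]
        have e1 : ((2*(i+2^(j+1))+1 : ℕ) : ℤ) = ((2*i+1 : ℕ) : ℤ) + 2^(j+2) := by push_cast; ring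
        rw [e1]
        have e2 : (2 * M : ℕ) = (2^(j+4) : ℕ) := by rw [hM]; ring
        have e3 : l * (((2*i+1 : ℕ) : ℤ) + 2^(j+2))^2
            = (l * ((2*i+1 : ℕ) : ℤ)^2 + 2^(j+3) * l)
              + 2^(j+4) * (l * ((i:ℤ) + 2^j)) := by push_cast; ring
        rw [e2, e3]
        push_cast
        rw [Int.add_mul_emod_self_left]
      have hEtwo : E (2*M) ((2:ℤ)^(j+3) * l) = -1 := by
        have e4 : (2 * M : ℕ) = 2^(j+3) * 2 := by rw [hM]; ring
        have e5 : ((2:ℤ)^(j+3) * l) = ((2^(j+3) : ℕ) : ℤ) * l := by push_cast; ring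
        rw [e4, e5, E_div _ _ _ (by positivity), E_two_odd l hl]
      rw [step1, E_add, hEtwo, mul_neg_one]
    have hO : ∑ δ ∈ range M, h δ = - ∑ δ ∈ range M, h δ := by
      conv_lhs => rw [← sum_range_shift M h hper (2^(j+1))]
      rw [Finset.sum_congr rfl (fun i _ => hneg i), Finset.sum_neg_distrib]
    have h2O : (2:ℂ) * ∑ δ ∈ range M, h δ = 0 := by linear_combination hO
    have := mul_eq_zero.mp h2O
    simpa using this
  rw [hEsum, hodd, add_zero]

lemma E_reduce (q : ℕ) (l c r d : ℤ) (h : c = r + (q:ℤ) * d) : E q (l * c) = E q (l * r) := by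
  have h2 : l * c = l * r + (q:ℤ) * (l * d) := by rw [h]; ring
  rw [h2, E_add, E_int_mul, mul_one]

lemma E_sq_odd (q : ℕ) (l : ℤ) (hl : ¬ (2:ℤ) ∣ l) (hq : q = 2 * 2) : E q l * E q l = -1 := by
  rw [← E_add, hq]
  have : l + l = ((2:ℕ):ℤ) * l := by push_cast; ring
  rw [this, E_div _ _ _ two_ne_zero, E_two_odd l hl]

lemma gg4 (l : ℤ) (hl : ¬ (2:ℤ) ∣ l) : (gg (2^2) l)^2 = 2^(2+1) * E 4 l := by
  have hg : gg (2^2) l = 2 + 2 * E 4 l := by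
    have h4 : (2:ℕ)^2 = 4 := by norm_num
    unfold gg
    rw [h4, Finset.sum_range_succ, Finset.sum_range_succ, Finset.sum_range_succ,
      Finset.sum_range_succ, Finset.sum_range_zero]
    have t0 : E 4 (l * ((0:ℕ):ℤ)^2) = 1 := by
      norm_num [E_zero]
    have t1 : E 4 (l * ((1:ℕ):ℤ)^2) = E 4 l := by norm_num
    have t2 : E 4 (l * ((2:ℕ):ℤ)^2) = 1 := by
      have : l * ((2:ℕ):ℤ)^2 = l * 4 := by norm_num
      rw [this, E_reduce 4 l 4 0 1 (by norm_num)]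
      norm_num [E_zero]
    have t3 : E 4 (l * ((3:ℕ):ℤ)^2) = E 4 l := by
      have : l * ((3:ℕ):ℤ)^2 = l * 9 := by norm_num
      rw [this, E_reduce 4 l 9 1 2 (by norm_num)]
      norm_num
    rw [t0, t1, t2, t3]; ring
  rw [hg]
  have hsq := E_sq_odd 4 l hl (by norm_num)
  linear_combination (4:ℂ) * hsq

lemma gg8 (l : ℤ) (hl : ¬ (2:ℤ) ∣ l) : (gg (2^3) l)^2 = 2^(3+1) * E 4 l := by
  have c4 : E 8 (l * 4) = -1 := by
    have : l * 4 = ((4:ℕ):ℤ) * l := by push_cast; ring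
    rw [this, (by norm_num : (8:ℕ) = 4 * 2), E_div _ _ _ (by norm_num), E_two_odd l hl]
  have hg : gg (2^3) l = 4 * E 8 l := by
    have h8 : (2:ℕ)^3 = 8 := by norm_num
    unfold gg
    rw [h8, Finset.sum_range_succ, Finset.sum_range_succ, Finset.sum_range_succ,
      Finset.sum_range_succ, Finset.sum_range_succ, Finset.sum_range_succ,
      Finset.sum_range_succ, Finset.sum_range_succ, Finset.sum_range_zero]
    have t0 : E 8 (l * ((0:ℕ):ℤ)^2) = 1 := by norm_num [E_zero]
    have t1 : E 8 (l * ((1:ℕ):ℤ)^2) = E 8 l := by norm_num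
    have t2 : E 8 (l * ((2:ℕ):ℤ)^2) = -1 := by
      have : l * ((2:ℕ):ℤ)^2 = l * 4 := by norm_num
      rw [this, c4]
    have t3 : E 8 (l * ((3:ℕ):ℤ)^2) = E 8 l := by
      have : l * ((3:ℕ):ℤ)^2 = l * 9 := by norm_num
      rw [this, E_reduce 8 l 9 1 1 (by norm_num)]
      norm_num
    have t4 : E 8 (l * ((4:ℕ):ℤ)^2) = 1 := by
      have : l * ((4:ℕ):ℤ)^2 = l * 16 := by norm_num
      rw [this, E_reduce 8 l 16 0 2 (by norm_num)]
      norm_num [E_zero]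
    have t5 : E 8 (l * ((5:ℕ):ℤ)^2) = E 8 l := by
      have : l * ((5:ℕ):ℤ)^2 = l * 25 := by norm_num
      rw [this, E_reduce 8 l 25 1 3 (by norm_num)]
      norm_num
    have t6 : E 8 (l * ((6:ℕ):ℤ)^2) = -1 := by
      have : l * ((6:ℕ):ℤ)^2 = l * 36 := by norm_num
      rw [this, E_reduce 8 l 36 4 4 (by norm_num), c4]
    have t7 : E 8 (l * ((7:ℕ):ℤ)^2) = E 8 l := by
      have : l * ((7:ℕ):ℤ)^2 = l * 49 := by norm_num
      rw [this, E_reduce 8 l 49 1 6 (by norm_num)]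
      norm_num
    rw [t0, t1, t2, t3, t4, t5, t6, t7]; ring
  rw [hg]
  have hsq : E 8 l * E 8 l = E 4 l := by
    rw [← E_add]
    have : l + l = ((2:ℕ):ℤ) * l := by push_cast; ring
    rw [this, (by norm_num : (8:ℕ) = 2 * 4), E_div _ _ _ two_ne_zero]
  linear_combination (16:ℂ) * hsq

lemma gg_sq : ∀ ν : ℕ, 2 ≤ ν → ∀ l : ℤ, ¬ (2:ℤ) ∣ l → (gg (2^ν) l)^2 = 2^(ν+1) * E 4 l := by
  intro ν
  induction ν using Nat.strong_induction_on with
  | _ ν ih =>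
    match ν with
    | 0 => intro h; omega
    | 1 => intro h; omega
    | 2 => intro _ l hl; exact gg4 l hl
    | 3 => intro _ l hl; exact gg8 l hl
    | (j+4) =>
      intro _ l hl
      have hrec := gg_rec j l hl
      have hih := ih (j+2) (by omega) (by omega) l hl
      rw [hrec]
      rw [mul_pow, hih]
      ring

noncomputable def psi (N : ℕ) (x : ZMod N) : ℂ := E N (x.val)

lemma psi_intCast (N : ℕ) [NeZero N] (a : ℤ) : psi N ((a : ZMod N)) = E N a := by
  unfold psi
  apply E_congr
  rw [Int.ModEq, ZMod.val_intCast, Int.emod_emod_of_dvd _ dvd_rfl]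

lemma psi_add (N : ℕ) [NeZero N] (x y : ZMod N) : psi N (x + y) = psi N x * psi N y := by
  unfold psi
  rw [← E_add]
  apply E_congr
  rw [Int.ModEq, ZMod.val_add]
  push_cast
  rw [Int.emod_emod_of_dvd _ dvd_rfl]

lemma sum_range_zmod (N : ℕ) [NeZero N] (F : ZMod N → ℂ) :
    ∑ α ∈ range N, F ((α : ℕ) : ZMod N) = ∑ x : ZMod N, F x := by
  apply Finset.sum_nbij' (fun α => ((α : ℕ) : ZMod N)) (fun x => x.val)
  · intro a _; exact Finset.mem_univ _
  · intro x _; exact Finset.mem_range.mpr (ZMod.val_lt x)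
  · intro a ha; exact ZMod.val_cast_of_lt (Finset.mem_range.mp ha)
  · intro x _; exact ZMod.natCast_rightInverse x
  · intro a _; rfl

lemma gaussS_zmod (N : ℕ) [NeZero N] (k m : ℤ) :
    gaussS N k m = ∑ x : ZMod N, psi N ((k : ZMod N) * x^2 + (m : ZMod N) * x) := by
  rw [← sum_range_zmod]
  unfold gaussS
  apply Finset.sum_congr rfl
  intro α _
  have : ((k : ZMod N) * ((α:ℕ) : ZMod N)^2 + (m : ZMod N) * ((α:ℕ) : ZMod N))
      = (((k * (α:ℤ)^2 + m * (α:ℤ) : ℤ)) : ZMod N) := by push_cast; ring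
  rw [this, psi_intCast]
  rfl

lemma gg_zmod (N : ℕ) [NeZero N] (l : ℤ) :
    gg N l = ∑ x : ZMod N, psi N ((l : ZMod N) * x^2) := by
  rw [← sum_range_zmod]
  unfold gg
  apply Finset.sum_congr rfl
  intro α _
  have : ((l : ZMod N) * ((α:ℕ) : ZMod N)^2) = (((l * (α:ℤ)^2 : ℤ)) : ZMod N) := by push_cast; ring
  rw [this, psi_intCast]

lemma isUnit_odd_cast (ν : ℕ) (l : ℤ) (hl : ¬ (2:ℤ) ∣ l) : IsUnit ((l : ZMod (2^ν))) := by
  have hcop : IsCoprime l ((2:ℤ)^ν) := by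
    apply IsCoprime.pow_right
    rw [Int.isCoprime_iff_gcd_eq_one]
    have h1 : (Int.gcd l 2 : ℤ) ∣ l := Int.gcd_dvd_left _ _
    have h2 : (Int.gcd l 2 : ℤ) ∣ 2 := Int.gcd_dvd_right _ _
    have h3 : Int.gcd l 2 ∣ 2 := by exact_mod_cast h2
    have h4 : Int.gcd l 2 = 1 ∨ Int.gcd l 2 = 2 := by
      rcases (Nat.le_of_dvd (by norm_num) h3).lt_or_eq with h | h
      · left
        interval_cases h5 : Int.gcd l 2
        · exfalso
          rw [Int.gcd_eq_zero_iff] at h5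
          exact hl (h5.1 ▸ dvd_zero 2)
        · rfl
      · right; exact h
    rcases h4 with h | h
    · exact h
    · exact absurd (h ▸ h1) (by exact_mod_cast hl)
  obtain ⟨u, v, huv⟩ := hcop
  have : ((u * l + v * 2^ν : ℤ) : ZMod (2^ν)) = 1 := by rw [huv]; norm_num
  push_cast at this
  have h2 : ((2:ZMod (2^ν)))^ν = 0 := by
    have : ((2:ℤ)^ν : ZMod (2^ν)) = (((2^ν : ℕ) : ℤ) : ZMod (2^ν)) := by push_cast; ring
    have h3 : (((2^ν : ℕ) : ℤ) : ZMod (2^ν)) = 0 := by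
      rw [Int.cast_natCast, ZMod.natCast_self]
    push_cast at this h3 ⊢
    rw [this, h3]
  rw [h2, mul_zero, add_zero] at this
  exact IsUnit.of_mul_eq_one _ (by rw [mul_comm] at this; exact this)

lemma gauss_complete (N : ℕ) [NeZero N] (l m₁ : ℤ) (hu : IsUnit ((l : ZMod N))) :
    gaussS N l (2 * m₁) = psi N (-((l : ZMod N))⁻¹ * (m₁ : ZMod N)^2) * gg N l := by
  rw [gaussS_zmod, gg_zmod, Finset.mul_sum]
  have key := Equiv.sum_comp (Equiv.subRight ((l : ZMod N)⁻¹ * (m₁ : ZMod N)))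
      (fun x : ZMod N => psi N ((l : ZMod N) * x^2 + ((2 * m₁ : ℤ) : ZMod N) * x))
  rw [← key]
  apply Finset.sum_congr rfl
  intro x _
  simp only [Equiv.subRight_apply]
  have hinv : (l : ZMod N) * (l : ZMod N)⁻¹ = 1 := ZMod.mul_inv_of_unit _ hu
  have harg : (l : ZMod N) * (x - (l : ZMod N)⁻¹ * (m₁ : ZMod N))^2
      + ((2 * m₁ : ℤ) : ZMod N) * (x - (l : ZMod N)⁻¹ * (m₁ : ZMod N))
      = (-((l : ZMod N))⁻¹ * (m₁ : ZMod N)^2) + (l : ZMod N) * x^2 := by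
    push_cast
    linear_combination ((l : ZMod N)⁻¹ * (m₁ : ZMod N)^2 - 2 * (m₁ : ZMod N) * x) * hinv
  rw [harg, psi_add]

lemma kloos_eq (N : ℕ) [NeZero N] (h2 : 2 ∣ N)
    (hunit : ∀ p : ℕ, ¬ 2 ∣ p → IsUnit ((p : ZMod N))) (k n : ℤ) :
    kloos N k n = ∑ l ∈ (range N).filter (fun l : ℕ => ¬ 2 ∣ l),
      E N (k * (l : ℤ) + n * ((((l : ZMod N))⁻¹.val : ℕ) : ℤ)) := by
  have hsnd : ∀ p : ℕ × ℕ, p ∈ ((Finset.range N) ×ˢ (Finset.range N)).filter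
      (fun p : ℕ × ℕ => ((p.1 : ℤ) * (p.2 : ℤ)) % N = 1 % (N : ℤ)) →
      (((p.1 : ZMod N))⁻¹.val = p.2) := by
    intro p hp
    rw [Finset.mem_filter, Finset.mem_product] at hp
    obtain ⟨⟨hp1, hp2⟩, hcond⟩ := hp
    have hzz : ((p.1 : ℕ) : ZMod N) * ((p.2 : ℕ) : ZMod N) = 1 := by
      have h := (ZMod.intCast_eq_intCast_iff _ _ _).mpr hcond
      push_cast at h
      exact h
    rw [ZMod.inv_eq_of_mul_eq_one N _ _ hzz]
    exact ZMod.val_cast_of_lt (Finset.mem_range.mp hp2)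
  have hodd : ∀ p : ℕ × ℕ, p ∈ ((Finset.range N) ×ˢ (Finset.range N)).filter
      (fun p : ℕ × ℕ => ((p.1 : ℤ) * (p.2 : ℤ)) % N = 1 % (N : ℤ)) → ¬ 2 ∣ p.1 := by
    intro p hp hdvd
    rw [Finset.mem_filter, Finset.mem_product] at hp
    obtain ⟨⟨hp1, hp2⟩, hcond⟩ := hp
    have hmod : ((p.1 : ℤ) * (p.2 : ℤ)) ≡ 1 [ZMOD (N : ℤ)] := hcond
    obtain ⟨d, hd⟩ := hmod.dvd
    obtain ⟨c, hc⟩ := hdvd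
    have h21 : (2:ℤ) ∣ 1 := by
      have e1 : (1 : ℤ) = (p.1 : ℤ) * (p.2 : ℤ) + (N:ℤ) * d := by linarith
      rw [e1]
      apply dvd_add
      · exact Dvd.dvd.mul_right ⟨(c:ℤ), by exact_mod_cast hc⟩ _
      · exact Dvd.dvd.mul_right (by exact_mod_cast h2) _
    norm_num at h21
  unfold kloos
  apply Finset.sum_nbij' (fun p : ℕ × ℕ => p.1) (fun l : ℕ => (l, ((l : ZMod N))⁻¹.val))
  · intro p hp
    rw [Finset.mem_filter]
    refine ⟨Finset.mem_range.mpr ?_, hodd p hp⟩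
    rw [Finset.mem_filter, Finset.mem_product] at hp
    exact Finset.mem_range.mp hp.1.1
  · intro l hl
    rw [Finset.mem_filter] at hl
    obtain ⟨hlr, hlo⟩ := hl
    rw [Finset.mem_filter, Finset.mem_product]
    refine ⟨⟨hlr, Finset.mem_range.mpr (ZMod.val_lt _)⟩, ?_⟩
    have hzz : ((l : ℕ) : ZMod N) * ((((l : ZMod N))⁻¹.val : ℕ) : ZMod N) = 1 := by
      rw [ZMod.natCast_rightInverse]
      exact ZMod.mul_inv_of_unit _ (hunit l hlo)
    show ((l : ℤ) * ((((l : ZMod N))⁻¹.val : ℕ) : ℤ)) ≡ 1 [ZMOD (N:ℤ)]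
    rw [← ZMod.intCast_eq_intCast_iff]
    push_cast
    exact hzz
  · intro p hp
    exact Prod.ext rfl (hsnd p hp)
  · intro l _
    rfl
  · intro p hp
    rw [hsnd p hp]
    rfl

lemma E_four (ν : ℕ) (hν : 2 ≤ ν) (z : ℤ) : E 4 z = E (2^ν) ((2:ℤ)^(ν-2) * z) := by
  have h1 : (2:ℕ)^ν = 2^(ν-2) * 4 := by
    have h4 : (4:ℕ) = 2^2 := rfl
    rw [h4, ← pow_add]
    congr 1
    omega
  have h2 : (2:ℤ)^(ν-2) * z = ((2^(ν-2) : ℕ) : ℤ) * z := by push_cast; ring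
  rw [h2, h1, E_div _ _ _ (pow_ne_zero _ two_ne_zero)]

theorem B_eq_kloosterman (ν : ℕ) (hν : 2 ≤ ν) (a m t : ℤ) (hm : 2 ∣ m) (ht : 2 ∣ t) :
    ∑ l ∈ (Finset.range (2^ν)).filter (fun l : ℕ => ¬ 2 ∣ l),
        e (((-a * (l : ℤ) : ℤ) : ℝ) / (2^ν)) * gaussS (2^ν) (l : ℤ) m * gaussS (2^ν) (l : ℤ) t
      = (2 : ℂ)^(ν + 1) * kloos (2^ν) (2^(ν - 2) - a) (-((m^2 + t^2) / 4)) := by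
  obtain ⟨m₁, rfl⟩ := hm
  obtain ⟨t₁, rfl⟩ := ht
  haveI : NeZero ((2:ℕ)^ν) := ⟨pow_ne_zero _ two_ne_zero⟩
  have hdiv : (((2*m₁)^2 + (2*t₁)^2 : ℤ)) / 4 = m₁^2 + t₁^2 := by
    have h : ((2*m₁)^2 + (2*t₁)^2 : ℤ) = 4 * (m₁^2 + t₁^2) := by ring
    rw [h, Int.mul_ediv_cancel_left _ (by norm_num)]
  have hunit : ∀ p : ℕ, ¬ 2 ∣ p → IsUnit ((p : ZMod (2^ν))) := by
    intro p hp
    have hz : ¬ (2:ℤ) ∣ (p:ℤ) := by exact_mod_cast hp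
    have := isUnit_odd_cast ν (p:ℤ) hz
    rwa [Int.cast_natCast] at this
  have h2N : 2 ∣ (2:ℕ)^ν := dvd_pow_self 2 (by omega)
  rw [hdiv, kloos_eq (2^ν) h2N hunit, Finset.mul_sum]
  apply Finset.sum_congr rfl
  intro l hl
  rw [Finset.mem_filter] at hl
  obtain ⟨hlr, hlo⟩ := hl
  have hloddZ : ¬ (2:ℤ) ∣ ((l:ℕ):ℤ) := by exact_mod_cast hlo
  have huZ : IsUnit ((((l:ℕ):ℤ) : ZMod (2^ν))) := by
    rw [Int.cast_natCast]; exact hunit l hlo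
  -- the e factor
  have hefac : e ((((-a * ((l:ℕ):ℤ)) : ℤ) : ℝ) / (2^ν)) = E (2^ν) (-a * (l:ℕ)) := by
    unfold E e
    congr 2
    push_cast
    ring
  rw [hefac, gauss_complete (2^ν) ((l:ℕ):ℤ) m₁ huZ, gauss_complete (2^ν) ((l:ℕ):ℤ) t₁ huZ]
  -- collapse the two gg factors
  have hG : gg (2^ν) ((l:ℕ):ℤ) * gg (2^ν) ((l:ℕ):ℤ)
      = (2:ℂ)^(ν+1) * psi (2^ν) ((((2:ℤ)^(ν-2) * (l:ℕ) : ℤ)) : ZMod (2^ν)) := by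
    rw [← sq, gg_sq ν hν _ hloddZ, E_four ν hν, psi_intCast]
  have key : ∀ (A X Y G C P : ℂ), G * G = C * P →
      A * (X * G) * (Y * G) = C * (A * X * Y * P) := by
    intro A X Y G C P h
    linear_combination (A * X * Y) * h
  rw [key _ _ _ _ _ _ hG]
  congr 1
  rw [← psi_intCast (2^ν) (-a * (l:ℕ)),
    ← psi_intCast (2^ν) ((2^(ν-2) - a) * ((l:ℕ):ℤ) + (-(m₁^2 + t₁^2)) * (((((l:ℕ) : ZMod (2^ν)))⁻¹.val : ℕ) : ℤ))]
  simp only [← psi_add]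
  congr 1
  have hV : (((((l:ℕ) : ZMod (2^ν)))⁻¹.val : ℕ) : ZMod (2^ν)) = (((l:ℕ) : ZMod (2^ν)))⁻¹ :=
    ZMod.natCast_rightInverse _
  push_cast [hV]
  ring
end

section
/- For coprime positive integers q₁, q₂ and integers a, h, n: H_{h,n}(q₁q₂, a) = H_{h\overline{q₂}, n\overline{q₂}}(q₁, a) · H_{h\overline{q₁}, n\overline{q₁}}(q₂, a), where \overline{q₂} is an inverse of q₂ modulo q₁ and \overline{q₁} is an inverse of q₁ modulo q₂. -/
noncomputable def Hsum (q : ℕ) (a h n : ℤ) : ℂ :=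
  ∑ p ∈ ((Finset.range q) ×ˢ (Finset.range q)).filter
      (fun p : ℕ × ℕ => ((p.1 : ℤ)^2 + (p.2 : ℤ)^2) % q = a % q),
    e (((-(p.1 : ℤ) * h - (p.2 : ℤ) * n : ℤ) : ℝ) / q)

lemma e_add (x y : ℝ) : e (x + y) = e x * e y := by
  unfold e; rw [← Complex.exp_add]; push_cast; ring_nf

lemma e_int (k : ℤ) : e k = 1 := by
  unfold e
  have := Complex.exp_int_mul_two_pi_mul_I k
  rw [← this]; push_cast; ring_nf

lemma e_add_int (x : ℝ) (k : ℤ) : e (x + k) = e x := by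
  rw [e_add, e_int, mul_one]

lemma e_eq_of_emod {q : ℕ} (hq : 0 < q) {m m' : ℤ} (hmm : m % q = m' % q) :
    e ((m:ℝ)/q) = e ((m':ℝ)/q) := by
  obtain ⟨k, hk⟩ : (q:ℤ) ∣ m - m' := Int.ModEq.dvd (hmm.symm)
  have hm : m = m' + q * k := by linarith
  have hq' : (q:ℝ) ≠ 0 := by positivity
  have : (m:ℝ)/q = (m':ℝ)/q + k := by
    rw [hm]; push_cast; field_simp
  rw [this, e_add_int]

lemma sq_mod (q : ℕ) (x y : ℤ) : ((x % (q:ℤ))^2 + (y % (q:ℤ))^2) % (q:ℤ) = (x^2 + y^2) % (q:ℤ) :=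
  Int.ModEq.add (Int.ModEq.pow 2 (Int.emod_emod_of_dvd x dvd_rfl))
    (Int.ModEq.pow 2 (Int.emod_emod_of_dvd y dvd_rfl))

theorem Hsum_multiplicative (q₁ q₂ : ℕ) (hq₁ : 0 < q₁) (hq₂ : 0 < q₂)
    (hco : Nat.Coprime q₁ q₂) (a h n : ℤ) (b₁ b₂ : ℤ)
    (hb₂ : ((q₂ : ℤ) * b₂) % q₁ = 1 % (q₁ : ℤ)) (hb₁ : ((q₁ : ℤ) * b₁) % q₂ = 1 % (q₂ : ℤ)) :
    Hsum (q₁ * q₂) a h n = Hsum q₁ a (h * b₂) (n * b₂) * Hsum q₂ a (h * b₁) (n * b₁) := by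
  have hQ : 0 < q₁ * q₂ := Nat.mul_pos hq₁ hq₂
  have hQZ : (0:ℤ) < (q₁:ℤ) * q₂ := by exact_mod_cast hQ
  have hd₁ : (q₁:ℤ) ∣ (q₁:ℤ) * q₂ := ⟨q₂, rfl⟩
  have hd₂ : (q₂:ℤ) ∣ (q₁:ℤ) * q₂ := ⟨q₁, mul_comm _ _⟩
  have combine : ∀ z w : ℤ, z % (q₁:ℤ) = w % (q₁:ℤ) → z % (q₂:ℤ) = w % (q₂:ℤ) →
      z % ((q₁:ℤ) * q₂) = w % ((q₁:ℤ) * q₂) := by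
    intro z w h1 h2
    exact (Int.modEq_and_modEq_iff_modEq_mul (by simpa using hco)).mp ⟨h1, h2⟩
  set g : ℕ → ℕ → ℕ := fun u v => (((u:ℤ)*((q₂:ℤ)*b₂) + (v:ℤ)*((q₁:ℤ)*b₁)) % ((q₁:ℤ)*q₂)).toNat with hg
  have gcast : ∀ u v : ℕ, ((g u v : ℕ) : ℤ) =
      ((u:ℤ)*((q₂:ℤ)*b₂) + (v:ℤ)*((q₁:ℤ)*b₁)) % ((q₁:ℤ)*q₂) := fun u v =>
    Int.toNat_of_nonneg (Int.emod_nonneg _ (ne_of_gt hQZ))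
  have glt : ∀ u v : ℕ, g u v < q₁ * q₂ := by
    intro u v
    have h1 := Int.emod_lt_of_pos ((u:ℤ)*((q₂:ℤ)*b₂) + (v:ℤ)*((q₁:ℤ)*b₁)) hQZ
    have hgc := gcast u v
    omega
  have gmod₁ : ∀ u v : ℕ, ((g u v : ℕ) : ℤ) % q₁ = (u:ℤ) % q₁ := by
    intro u v
    rw [gcast, Int.emod_emod_of_dvd _ hd₁]
    calc ((u:ℤ)*((q₂:ℤ)*b₂) + (v:ℤ)*((q₁:ℤ)*b₁)) % (q₁:ℤ)
        = ((u:ℤ)*1 + 0) % (q₁:ℤ) := by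
          refine Int.ModEq.add ((Int.ModEq.refl (u:ℤ)).mul hb₂) ?_
          exact Int.modEq_zero_iff_dvd.mpr ⟨(v:ℤ)*b₁, by ring⟩
      _ = (u:ℤ) % q₁ := by ring_nf
  have gmod₂ : ∀ u v : ℕ, ((g u v : ℕ) : ℤ) % q₂ = (v:ℤ) % q₂ := by
    intro u v
    rw [gcast, Int.emod_emod_of_dvd _ hd₂]
    calc ((u:ℤ)*((q₂:ℤ)*b₂) + (v:ℤ)*((q₁:ℤ)*b₁)) % (q₂:ℤ)
        = (0 + (v:ℤ)*1) % (q₂:ℤ) := by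
          refine Int.ModEq.add ?_ ((Int.ModEq.refl (v:ℤ)).mul hb₁)
          exact Int.modEq_zero_iff_dvd.mpr ⟨(u:ℤ)*b₂, by ring⟩
      _ = (v:ℤ) % q₂ := by ring_nf
  have key : Hsum (q₁ * q₂) a h n =
      ∑ r ∈ (((Finset.range q₁) ×ˢ (Finset.range q₁)).filter
          (fun p : ℕ × ℕ => ((p.1 : ℤ)^2 + (p.2 : ℤ)^2) % (q₁:ℤ) = a % (q₁:ℤ))) ×ˢ
        (((Finset.range q₂) ×ˢ (Finset.range q₂)).filter
          (fun p : ℕ × ℕ => ((p.1 : ℤ)^2 + (p.2 : ℤ)^2) % (q₂:ℤ) = a % (q₂:ℤ))),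
        (e (((-(r.1.1 : ℤ) * (h*b₂) - (r.1.2 : ℤ) * (n*b₂) : ℤ) : ℝ) / q₁) *
         e (((-(r.2.1 : ℤ) * (h*b₁) - (r.2.2 : ℤ) * (n*b₁) : ℤ) : ℝ) / q₂)) := by
    unfold Hsum
    refine Finset.sum_nbij'
      (fun p => ((p.1 % q₁, p.2 % q₁), (p.1 % q₂, p.2 % q₂)))
      (fun r => (g r.1.1 r.2.1, g r.1.2 r.2.2)) ?_ ?_ ?_ ?_ ?_
    · -- maps to
      intro p hp
      simp only [Finset.mem_filter, Finset.mem_product, Finset.mem_range] at hp ⊢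
      obtain ⟨⟨h1, h2⟩, hcond⟩ := hp
      have hcond' : ((p.1:ℤ)^2 + (p.2:ℤ)^2) % ((q₁:ℤ)*q₂) = a % ((q₁:ℤ)*q₂) := by
        push_cast at hcond; exact hcond
      have hc1 : ((p.1:ℤ)^2 + (p.2:ℤ)^2) % (q₁:ℤ) = a % (q₁:ℤ) := by
        have := congrArg (fun z => z % (q₁:ℤ)) hcond'
        simpa [Int.emod_emod_of_dvd _ hd₁] using this
      have hc2 : ((p.1:ℤ)^2 + (p.2:ℤ)^2) % (q₂:ℤ) = a % (q₂:ℤ) := by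
        have := congrArg (fun z => z % (q₂:ℤ)) hcond'
        simpa [Int.emod_emod_of_dvd _ hd₂] using this
      refine ⟨⟨⟨Nat.mod_lt _ hq₁, Nat.mod_lt _ hq₁⟩, ?_⟩, ⟨⟨Nat.mod_lt _ hq₂, Nat.mod_lt _ hq₂⟩, ?_⟩⟩
      · push_cast; rw [sq_mod]; exact hc1
      · push_cast; rw [sq_mod]; exact hc2
    · -- maps from
      intro r hr
      simp only [Finset.mem_filter, Finset.mem_product, Finset.mem_range] at hr ⊢
      obtain ⟨⟨⟨hu1, hu2⟩, hc1⟩, ⟨⟨hv1, hv2⟩, hc2⟩⟩ := hr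
      refine ⟨⟨glt _ _, glt _ _⟩, ?_⟩
      push_cast
      refine combine _ _ ?_ ?_
      · calc ((g r.1.1 r.2.1 : ℤ)^2 + (g r.1.2 r.2.2 : ℤ)^2) % (q₁:ℤ)
            = ((r.1.1:ℤ)^2 + (r.1.2:ℤ)^2) % (q₁:ℤ) :=
              Int.ModEq.add (Int.ModEq.pow 2 (gmod₁ _ _)) (Int.ModEq.pow 2 (gmod₁ _ _))
          _ = a % (q₁:ℤ) := hc1
      · calc ((g r.1.1 r.2.1 : ℤ)^2 + (g r.1.2 r.2.2 : ℤ)^2) % (q₂:ℤ)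
            = ((r.2.1:ℤ)^2 + (r.2.2:ℤ)^2) % (q₂:ℤ) :=
              Int.ModEq.add (Int.ModEq.pow 2 (gmod₂ _ _)) (Int.ModEq.pow 2 (gmod₂ _ _))
          _ = a % (q₂:ℤ) := hc2
    · -- left inverse
      intro p hp
      simp only [Finset.mem_filter, Finset.mem_product, Finset.mem_range] at hp
      obtain ⟨⟨h1, h2⟩, _⟩ := hp
      have key : ∀ x : ℕ, x < q₁ * q₂ → g (x % q₁) (x % q₂) = x := by
        intro x hx
        have e1 : ((g (x % q₁) (x % q₂) : ℕ) : ℤ) % q₁ = (x:ℤ) % q₁ := by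
          rw [gmod₁]; push_cast; exact Int.emod_emod_of_dvd _ dvd_rfl
        have e2 : ((g (x % q₁) (x % q₂) : ℕ) : ℤ) % q₂ = (x:ℤ) % q₂ := by
          rw [gmod₂]; push_cast; exact Int.emod_emod_of_dvd _ dvd_rfl
        have hcmb := combine _ _ e1 e2
        rw [Int.emod_eq_of_lt (by positivity) (by exact_mod_cast glt _ _),
          Int.emod_eq_of_lt (by positivity) (by exact_mod_cast hx)] at hcmb
        exact_mod_cast hcmb
      exact Prod.ext (key _ h1) (key _ h2)
    · -- right inverse
      intro r hr
      simp only [Finset.mem_filter, Finset.mem_product, Finset.mem_range] at hr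
      obtain ⟨⟨⟨hu1, hu2⟩, _⟩, ⟨⟨hv1, hv2⟩, _⟩⟩ := hr
      have k1 : ∀ u v : ℕ, u < q₁ → g u v % q₁ = u := by
        intro u v hu
        have : ((g u v % q₁ : ℕ) : ℤ) = (u : ℤ) := by
          push_cast
          rw [gmod₁, Int.emod_eq_of_lt (Int.ofNat_nonneg u) (by exact_mod_cast hu)]
        exact_mod_cast this
      have k2 : ∀ u v : ℕ, v < q₂ → g u v % q₂ = v := by
        intro u v hv
        have : ((g u v % q₂ : ℕ) : ℤ) = (v : ℤ) := by
          push_cast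
          rw [gmod₂, Int.emod_eq_of_lt (Int.ofNat_nonneg v) (by exact_mod_cast hv)]
        exact_mod_cast this
      exact Prod.ext (Prod.ext (k1 _ _ hu1) (k1 _ _ hu2)) (Prod.ext (k2 _ _ hv1) (k2 _ _ hv2))
    · -- values
      intro p hp
      rw [← e_add]
      set u := p.1 with hu
      set w := p.2 with hw
      have h1 : (q₁:ℝ) ≠ 0 := by positivity
      have h2 : (q₂:ℝ) ≠ 0 := by positivity
      have harith : ((-((u % q₁ : ℕ):ℤ) * (h*b₂) - ((w % q₁ : ℕ):ℤ) * (n*b₂) : ℤ) : ℝ) / (q₁:ℝ) +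
          ((-((u % q₂ : ℕ):ℤ) * (h*b₁) - ((w % q₂ : ℕ):ℤ) * (n*b₁) : ℤ) : ℝ) / (q₂:ℝ) =
          (((q₂:ℤ) * (-((u % q₁ : ℕ):ℤ) * (h*b₂) - ((w % q₁ : ℕ):ℤ) * (n*b₂))
            + (q₁:ℤ) * (-((u % q₂ : ℕ):ℤ) * (h*b₁) - ((w % q₂ : ℕ):ℤ) * (n*b₁)) : ℤ) : ℝ) / ((q₁*q₂ : ℕ):ℝ) := by
        push_cast
        field_simp
      rw [harith]
      refine e_eq_of_emod hQ ?_
      have mb₂ : ((q₂:ℤ)*b₂) ≡ 1 [ZMOD (q₁:ℤ)] := hb₂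
      have mb₁ : ((q₁:ℤ)*b₁) ≡ 1 [ZMOD (q₂:ℤ)] := hb₁
      have me : ∀ (q : ℕ) (x : ℤ), (x % (q:ℤ)) ≡ x [ZMOD (q:ℤ)] :=
        fun q x => Int.emod_emod_of_dvd x dvd_rfl
      have hN₁ : ((q₂:ℤ) * (-((u % q₁ : ℕ):ℤ) * (h*b₂) - ((w % q₁ : ℕ):ℤ) * (n*b₂))
            + (q₁:ℤ) * (-((u % q₂ : ℕ):ℤ) * (h*b₁) - ((w % q₂ : ℕ):ℤ) * (n*b₁))) % (q₁:ℤ)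
          = (-(u:ℤ) * h - (w:ℤ) * n) % (q₁:ℤ) := by
        push_cast
        calc ((q₂:ℤ) * (-((u:ℤ) % q₁) * (h*b₂) - ((w:ℤ) % q₁) * (n*b₂))
              + (q₁:ℤ) * (-((u:ℤ) % q₂) * (h*b₁) - ((w:ℤ) % q₂) * (n*b₁)))
            = ((q₂:ℤ)*b₂) * (-((u:ℤ) % q₁) * h - ((w:ℤ) % q₁) * n)
              + (q₁:ℤ) * (-((u:ℤ) % q₂) * (h*b₁) - ((w:ℤ) % q₂) * (n*b₁)) := by ring
          _ ≡ 1 * (-((u:ℤ) % q₁) * h - ((w:ℤ) % q₁) * n) + 0 [ZMOD (q₁:ℤ)] :=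
              Int.ModEq.add (mb₂.mul (Int.ModEq.refl _))
                (Int.modEq_zero_iff_dvd.mpr ⟨_, rfl⟩)
          _ = -((u:ℤ) % q₁) * h - ((w:ℤ) % q₁) * n := by ring
          _ ≡ -(u:ℤ) * h - (w:ℤ) * n [ZMOD (q₁:ℤ)] :=
              Int.ModEq.sub ((Int.ModEq.neg (me _ u)).mul (Int.ModEq.refl h))
                ((me _ w).mul (Int.ModEq.refl n))
      have hN₂ : ((q₂:ℤ) * (-((u % q₁ : ℕ):ℤ) * (h*b₂) - ((w % q₁ : ℕ):ℤ) * (n*b₂))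
            + (q₁:ℤ) * (-((u % q₂ : ℕ):ℤ) * (h*b₁) - ((w % q₂ : ℕ):ℤ) * (n*b₁))) % (q₂:ℤ)
          = (-(u:ℤ) * h - (w:ℤ) * n) % (q₂:ℤ) := by
        push_cast
        calc ((q₂:ℤ) * (-((u:ℤ) % q₁) * (h*b₂) - ((w:ℤ) % q₁) * (n*b₂))
              + (q₁:ℤ) * (-((u:ℤ) % q₂) * (h*b₁) - ((w:ℤ) % q₂) * (n*b₁)))
            = ((q₁:ℤ)*b₁) * (-((u:ℤ) % q₂) * h - ((w:ℤ) % q₂) * n)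
              + (q₂:ℤ) * (-((u:ℤ) % q₁) * (h*b₂) - ((w:ℤ) % q₁) * (n*b₂)) := by ring
          _ ≡ 1 * (-((u:ℤ) % q₂) * h - ((w:ℤ) % q₂) * n) + 0 [ZMOD (q₂:ℤ)] :=
              Int.ModEq.add (mb₁.mul (Int.ModEq.refl _))
                (Int.modEq_zero_iff_dvd.mpr ⟨_, rfl⟩)
          _ = -((u:ℤ) % q₂) * h - ((w:ℤ) % q₂) * n := by ring
          _ ≡ -(u:ℤ) * h - (w:ℤ) * n [ZMOD (q₂:ℤ)] :=
              Int.ModEq.sub ((Int.ModEq.neg (me _ u)).mul (Int.ModEq.refl h))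
                ((me _ w).mul (Int.ModEq.refl n))
      have := combine _ _ hN₁ hN₂
      push_cast
      push_cast at this
      exact this.symm
  rw [key]
  unfold Hsum
  rw [Finset.sum_mul_sum, ← Finset.sum_product']
end

section
/- For every positive integer q and real y ≥ 1, Σ_{n > y} gcd(q,n)^{1/2}/n² ≪ τ(q)/y, with an absolute implied constant. -/
open Finset

private lemma tail_sq (t : ℝ) (ht : 0 < t) :
    (∑' m : ℕ, if t < (m : ℝ) then ((m : ℝ) ^ 2)⁻¹ else 0) ≤ 2 / t := by
  have hsum0 : Summable (fun m : ℕ => ((m : ℝ) ^ 2)⁻¹) := by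
    simpa [one_div] using Real.summable_one_div_nat_pow.mpr (le_refl 2)
  have hsum : Summable (fun m : ℕ => if t < (m : ℝ) then ((m : ℝ) ^ 2)⁻¹ else 0) := by
    refine Summable.of_nonneg_of_le (fun m => ?_) (fun m => ?_) hsum0
    · split <;> positivity
    · split
      · exact le_rfl
      · positivity
  refine hsum.tsum_le_of_sum_le (fun s => ?_)
  have h1 : ∑ m ∈ s, (if t < (m : ℝ) then ((m : ℝ) ^ 2)⁻¹ else 0)
      = ∑ m ∈ s.filter (fun m : ℕ => t < (m : ℝ)), ((m : ℝ) ^ 2)⁻¹ := (Finset.sum_filter _ _).symm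
  have h2 : s.filter (fun m : ℕ => t < (m : ℝ)) ⊆ Finset.Ioo (⌊t⌋₊) (s.sup id + 1) := by
    intro m hm
    rw [Finset.mem_filter] at hm
    rw [Finset.mem_Ioo]
    refine ⟨(Nat.floor_lt ht.le).mpr hm.2, ?_⟩
    exact Nat.lt_succ_of_le (Finset.le_sup (f := id) hm.1)
  calc ∑ m ∈ s, (if t < (m : ℝ) then ((m : ℝ) ^ 2)⁻¹ else 0)
      ≤ ∑ m ∈ Finset.Ioo (⌊t⌋₊) (s.sup id + 1), ((m : ℝ) ^ 2)⁻¹ := by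
        rw [h1]
        exact Finset.sum_le_sum_of_subset_of_nonneg h2 (fun i _ _ => by positivity)
    _ ≤ 2 / ((⌊t⌋₊ : ℝ) + 1) := sum_Ioo_inv_sq_le _ _
    _ ≤ 2 / t := by
        gcongr
        exact (Nat.lt_floor_add_one t).le

theorem gcd_tail_sum_sq : ∃ C : ℝ, 0 < C ∧ ∀ (q : ℕ), 0 < q → ∀ (y : ℝ), 1 ≤ y →
    (∑' n : ℕ, if y < (n : ℝ) then Real.sqrt (Nat.gcd q n) / (n : ℝ)^2 else 0) ≤
      C * (q.divisors.card : ℝ) / y := by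
  refine ⟨2, two_pos, ?_⟩
  intro q hq y hy
  have hy0 : 0 < y := lt_of_lt_of_le one_pos hy
  set f : ℕ → ℝ := fun n => if y < (n : ℝ) then Real.sqrt (Nat.gcd q n) / (n : ℝ)^2 else 0 with hf
  set g : ℕ → ℕ → ℝ :=
    fun d n => if y < (n : ℝ) ∧ d ∣ n then Real.sqrt d / (n : ℝ)^2 else 0 with hgdef
  have hgnn : ∀ d n, 0 ≤ g d n := by
    intro d n; simp only [hgdef]; split <;> positivity
  have hsum0 : Summable (fun n : ℕ => ((n : ℝ) ^ 2)⁻¹) := by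
    simpa [one_div] using Real.summable_one_div_nat_pow.mpr (le_refl 2)
  have hgsum : ∀ d : ℕ, Summable (g d) := by
    intro d
    refine Summable.of_nonneg_of_le (hgnn d) (fun n => ?_) (hsum0.mul_left (Real.sqrt d))
    simp only [hgdef]
    split
    · rw [div_eq_mul_inv]
    · positivity
  have hfnn : ∀ n, 0 ≤ f n := by
    intro n; simp only [hf]; split <;> positivity
  have step1 : ∀ n, f n ≤ ∑ d ∈ q.divisors, g d n := by
    intro n
    by_cases hn : y < (n : ℝ)
    · have hmem : Nat.gcd q n ∈ q.divisors :=
        Nat.mem_divisors.mpr ⟨Nat.gcd_dvd_left _ _, hq.ne'⟩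
      have hfe : f n = g (Nat.gcd q n) n := by
        simp only [hf, hgdef, hn, Nat.gcd_dvd_right, and_self, if_true, true_and]
      rw [hfe]
      exact Finset.single_le_sum (fun d _ => hgnn d n) hmem
    · simp only [hf, hn, if_false]
      exact Finset.sum_nonneg (fun d _ => hgnn d n)
  have hsumsum : Summable (fun n => ∑ d ∈ q.divisors, g d n) :=
    summable_sum (fun d _ => hgsum d)
  have hfsum : Summable f := Summable.of_nonneg_of_le hfnn step1 hsumsum
  have key : ∀ d ∈ q.divisors, (∑' n, g d n) ≤ 2 / y := by
    intro d hd
    have hd0 : 0 < d := Nat.pos_of_mem_divisors hd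
    have hd0' : (0 : ℝ) < d := by exact_mod_cast hd0
    have hinj : Function.Injective (fun m : ℕ => d * m) :=
      fun a b h => Nat.eq_of_mul_eq_mul_left hd0 h
    have hsupp : Function.support (g d) ⊆ Set.range (fun m : ℕ => d * m) := by
      intro n hn
      simp only [Function.mem_support, hgdef] at hn
      by_cases hc : y < (n : ℝ) ∧ d ∣ n
      · obtain ⟨m, hm⟩ := hc.2
        exact ⟨m, hm.symm⟩
      · simp [hc] at hn
    rw [← Function.Injective.tsum_eq hinj hsupp]
    have hcomp : Summable (fun m : ℕ => g d (d * m)) :=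
      (hgsum d).comp_injective hinj
    have htailsum : Summable (fun m : ℕ => if y / d < (m : ℝ) then ((m : ℝ) ^ 2)⁻¹ else 0) := by
      refine Summable.of_nonneg_of_le (fun m => ?_) (fun m => ?_) hsum0
      · split <;> positivity
      · split
        · exact le_rfl
        · positivity
    have hle : ∀ m : ℕ, g d (d * m) ≤
        (Real.sqrt d / (d : ℝ)^2) * (if y / d < (m : ℝ) then ((m : ℝ) ^ 2)⁻¹ else 0) := by
      intro m
      by_cases hc : y < ((d * m : ℕ) : ℝ)
      · have hcm : y / d < (m : ℝ) := by
          rw [div_lt_iff₀ hd0']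
          calc y < ((d * m : ℕ) : ℝ) := hc
            _ = (m : ℝ) * d := by push_cast; ring
        have : g d (d * m) = Real.sqrt d / ((d * m : ℕ) : ℝ)^2 := by
          simp only [hgdef, hc, Dvd.intro m rfl, and_self, if_true, true_and]
        rw [this, if_pos hcm]
        rw [div_eq_mul_inv, div_eq_mul_inv, mul_assoc, ← mul_inv]
        push_cast
        rw [mul_pow]
      · have : g d (d * m) = 0 := by
          simp only [hgdef]
          rw [if_neg]
          exact fun h => hc h.1
        rw [this]
        have : (0:ℝ) ≤ (if y / d < (m : ℝ) then ((m : ℝ) ^ 2)⁻¹ else 0) := by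
          split <;> positivity
        positivity
    calc (∑' m : ℕ, g d (d * m))
        ≤ ∑' m : ℕ, (Real.sqrt d / (d : ℝ)^2) *
            (if y / d < (m : ℝ) then ((m : ℝ) ^ 2)⁻¹ else 0) :=
          Summable.tsum_le_tsum hle hcomp (htailsum.mul_left _)
      _ = (Real.sqrt d / (d : ℝ)^2) *
            ∑' m : ℕ, (if y / d < (m : ℝ) then ((m : ℝ) ^ 2)⁻¹ else 0) := tsum_mul_left
      _ ≤ (Real.sqrt d / (d : ℝ)^2) * (2 / (y / d)) := by
          apply mul_le_mul_of_nonneg_left (tail_sq _ (div_pos hy0 hd0')) (by positivity)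
      _ ≤ 2 / y := by
          have hsd : Real.sqrt d ≤ (d : ℝ) := by
            have h1 : Real.sqrt d ^ 2 = (d : ℝ) := Real.sq_sqrt hd0'.le
            have h2 : (0:ℝ) ≤ Real.sqrt d := Real.sqrt_nonneg d
            have h3 : (1:ℝ) ≤ d := by exact_mod_cast hd0
            nlinarith
          have h1 : Real.sqrt d / (d:ℝ)^2 * (2 / (y / d)) = 2 * (Real.sqrt d / d) / y := by
            field_simp
          have h2 : Real.sqrt d / (d : ℝ) ≤ 1 := (div_le_one hd0').mpr hsd
          rw [h1]
          gcongr
          nlinarith [h2]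
    
  calc (∑' n, f n) ≤ ∑' n, ∑ d ∈ q.divisors, g d n := Summable.tsum_le_tsum step1 hfsum hsumsum
    _ = ∑ d ∈ q.divisors, ∑' n, g d n := Summable.tsum_finsetSum (fun d _ => hgsum d)
    _ ≤ ∑ _d ∈ q.divisors, 2 / y := Finset.sum_le_sum key
    _ = (q.divisors.card : ℝ) * (2 / y) := by rw [Finset.sum_const, nsmul_eq_mul]
    _ = 2 * (q.divisors.card : ℝ) / y := by ring
end

section
/- For every positive integer q and real y ≥ 1, Σ_{n > y} gcd(q,n)^{1/2}/n^{3/2} ≪ τ(q)·y^{−1/2}, with an absolute implied constant. -/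
open Finset

private lemma step_ineq (m : ℕ) (hm : 1 ≤ m) :
    1 / ((m:ℝ)+1)^((3:ℝ)/2) ≤ 2 / Real.sqrt m - 2 / Real.sqrt ((m:ℝ)+1) := by
  have hm1 : (1:ℝ) ≤ (m:ℝ) := by exact_mod_cast hm
  set a := Real.sqrt (m:ℝ) with ha
  set b := Real.sqrt ((m:ℝ)+1) with hb
  have ha1 : 1 ≤ a := by
    rw [ha, show (1:ℝ) = Real.sqrt 1 by simp]
    exact Real.sqrt_le_sqrt hm1
  have hb0 : 0 < b := Real.sqrt_pos.2 (by linarith)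
  have hab : a < b := Real.sqrt_lt_sqrt (by positivity) (by linarith)
  have ha2 : a^2 = (m:ℝ) := Real.sq_sqrt (by positivity)
  have hb2 : b^2 = (m:ℝ)+1 := Real.sq_sqrt (by linarith)
  have hpow : ((m:ℝ)+1)^((3:ℝ)/2) = b^3 := by
    rw [hb, Real.sqrt_eq_rpow, ← Real.rpow_natCast (((m:ℝ)+1) ^ (1/(2:ℝ))) 3,
      ← Real.rpow_mul (by linarith)]
    norm_num
  rw [hpow]
  have key : a * b * (a + b) ≤ 2 * b^3 := by nlinarith
  have hdiff : (b - a) * (a + b) = 1 := by nlinarith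
  rw [div_sub_div _ _ (by positivity) (by positivity),
    div_le_div_iff₀ (by positivity) (by positivity)]
  have hposab : (0:ℝ) < a + b := by linarith
  have h7 : a*b*(a+b) ≤ 2*b^3*((b-a)*(a+b)) := by rw [hdiff]; nlinarith [key]
  have h6 : a*b ≤ 2*(b-a)*b^3 := by nlinarith [h7, hposab]
  nlinarith [h6]

private lemma tail_Ioc (N : ℕ) (hN : 1 ≤ N) (M : ℕ) :
    ∑ m ∈ Finset.Ioc N M, 1 / (m:ℝ)^((3:ℝ)/2) ≤ 2 / Real.sqrt N := by
  rcases le_or_gt M N with h | h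
  · rw [Finset.Ioc_eq_empty (by omega)]
    simp
    positivity
  · have main : ∀ M : ℕ, N ≤ M → ∑ m ∈ Finset.Ioc N M, 1 / (m:ℝ)^((3:ℝ)/2)
        ≤ 2 / Real.sqrt N - 2 / Real.sqrt M := by
      intro M
      induction M with
      | zero => intro h0; omega
      | succ M ih =>
        intro hNM
        rcases Nat.eq_or_lt_of_le hNM with heq | hlt
        · rw [← heq, Finset.Ioc_eq_empty (by omega)]
          simp
        · have hNM' : N ≤ M := by omega
          rw [Finset.sum_Ioc_succ_top (by omega)]
          have ih' := ih hNM'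
          have hs := step_ineq M (le_trans hN hNM')
          push_cast
          push_cast at ih' hs
          linarith
    have := main M h.le
    have h2 : 0 ≤ 2 / Real.sqrt M := by positivity
    linarith

private lemma tail_sum_le (x : ℝ) (hx : 1 ≤ x) (F : Finset ℕ) :
    ∑ m ∈ F, (if x < (m:ℝ) then 1 / (m:ℝ)^((3:ℝ)/2) else 0) ≤ 3 / Real.sqrt x := by
  classical
  set N := ⌊x⌋₊ with hNdef
  have hx0 : (0:ℝ) < x := by linarith
  have hN1 : 1 ≤ N := Nat.le_floor (by exact_mod_cast hx)
  set M := F.sup id with hM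
  have hsub : F.filter (fun m : ℕ => x < (m:ℝ)) ⊆ Finset.Ioc N M := by
    intro m hm
    rw [Finset.mem_filter] at hm
    rw [Finset.mem_Ioc]
    constructor
    · have h1 : (N:ℝ) ≤ x := Nat.floor_le hx0.le
      exact_mod_cast lt_of_le_of_lt h1 hm.2
    · exact Finset.le_sup (f := id) hm.1
  rw [← Finset.sum_filter]
  calc ∑ m ∈ F.filter (fun m : ℕ => x < (m:ℝ)), 1 / (m:ℝ)^((3:ℝ)/2)
      ≤ ∑ m ∈ Finset.Ioc N M, 1 / (m:ℝ)^((3:ℝ)/2) :=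
        Finset.sum_le_sum_of_subset_of_nonneg hsub (by intros; positivity)
    _ ≤ 2 / Real.sqrt N := tail_Ioc N hN1 M
    _ ≤ 3 / Real.sqrt x := by
        have hNx : 4 * x ≤ 9 * (N:ℝ) := by
          have h2 : x < (N:ℝ) + 1 := Nat.lt_floor_add_one x
          have h3 : (1:ℝ) ≤ (N:ℝ) := by exact_mod_cast hN1
          linarith
        have hsN : 0 < Real.sqrt N := Real.sqrt_pos.2 (by positivity)
        have hsx : 0 < Real.sqrt x := Real.sqrt_pos.2 hx0
        rw [div_le_div_iff₀ hsN hsx]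
        have e1 : Real.sqrt N ^ 2 = (N:ℝ) := Real.sq_sqrt (by positivity)
        have e2 : Real.sqrt x ^ 2 = x := Real.sq_sqrt hx0.le
        nlinarith [sq_nonneg (2 * Real.sqrt x - 3 * Real.sqrt N)]

private lemma tail_sum_le' (x : ℝ) (hx : 0 < x) (F : Finset ℕ) :
    ∑ m ∈ F, (if x < (m:ℝ) then 1 / (m:ℝ)^((3:ℝ)/2) else 0) ≤ 3 := by
  classical
  set M := F.sup id with hM
  have hsub : F.filter (fun m : ℕ => x < (m:ℝ)) ⊆ Finset.Ioc 0 M := by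
    intro m hm
    rw [Finset.mem_filter] at hm
    rw [Finset.mem_Ioc]
    refine ⟨?_, Finset.le_sup (f := id) hm.1⟩
    rcases Nat.eq_zero_or_pos m with rfl | h
    · exfalso; simp at hm; linarith [hm.2]
    · exact h
  rw [← Finset.sum_filter]
  have h2 : ∑ m ∈ F.filter (fun m : ℕ => x < (m:ℝ)), 1 / (m:ℝ)^((3:ℝ)/2)
      ≤ ∑ m ∈ Finset.Ioc 0 M, 1 / (m:ℝ)^((3:ℝ)/2) :=
    Finset.sum_le_sum_of_subset_of_nonneg hsub (by intros; positivity)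
  refine h2.trans ?_
  rcases Nat.eq_zero_or_pos M with hM0 | hM0
  · rw [hM0]; simp
  · have hioc : Finset.Ioc 0 M = insert 1 (Finset.Ioc 1 M) := by
      ext m
      simp only [Finset.mem_Ioc, Finset.mem_insert]
      omega
    rw [hioc, Finset.sum_insert (by simp)]
    have h3 := tail_Ioc 1 le_rfl M
    rw [Nat.cast_one, Real.sqrt_one, div_one] at h3
    have h4 : (1:ℝ) / ((1:ℕ):ℝ)^((3:ℝ)/2) = 1 := by norm_num
    rw [h4]
    linarith

theorem gcd_tail_sum_threehalves : ∃ C : ℝ, 0 < C ∧ ∀ (q : ℕ), 0 < q → ∀ (y : ℝ), 1 ≤ y →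
    (∑' n : ℕ, if y < (n : ℝ) then Real.sqrt (Nat.gcd q n) / (n : ℝ)^((3:ℝ)/2) else 0) ≤
      C * (q.divisors.card : ℝ) / Real.sqrt y := by
  classical
  refine ⟨3, by norm_num, ?_⟩
  intro q hq y hy
  have hy0 : (0:ℝ) < y := by linarith
  have hsy : 0 < Real.sqrt y := Real.sqrt_pos.2 hy0
  set f : ℕ → ℝ := fun n : ℕ => if y < (n:ℝ) then Real.sqrt (Nat.gcd q n) / (n:ℝ)^((3:ℝ)/2) else 0
    with hf
  have hf0 : ∀ n, 0 ≤ f n := by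
    intro n; rw [hf]; dsimp only; split
    · positivity
    · exact le_refl 0
  have hsum : Summable f := by
    refine Summable.of_nonneg_of_le hf0 ?_
      ((Real.summable_one_div_nat_rpow.2 (show (1:ℝ) < 3/2 by norm_num)).mul_left (Real.sqrt q))
    intro n; rw [hf]; dsimp only; split
    · rw [div_eq_mul_one_div]
      exact mul_le_mul_of_nonneg_right
        (Real.sqrt_le_sqrt (by exact_mod_cast Nat.gcd_le_left n hq)) (by positivity)
    · positivity
  apply Summable.tsum_le_of_sum_le hsum
  intro F
  set g : ℕ → ℕ → ℝ := fun d n =>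
    if y < (n:ℝ) ∧ d ∣ n then Real.sqrt d / (n:ℝ)^((3:ℝ)/2) else 0 with hg
  have hg0 : ∀ d n, 0 ≤ g d n := by
    intro d n; rw [hg]; dsimp only; split
    · positivity
    · exact le_refl 0
  have hpt : ∀ n, f n ≤ ∑ d ∈ q.divisors, g d n := by
    intro n
    rw [hf]; dsimp only
    split
    · rename_i hyn
      have hmem : Nat.gcd q n ∈ q.divisors :=
        Nat.mem_divisors.2 ⟨Nat.gcd_dvd_left q n, hq.ne'⟩
      have heq : g (Nat.gcd q n) n = Real.sqrt (Nat.gcd q n) / (n:ℝ)^((3:ℝ)/2) := by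
        rw [hg]; dsimp only
        rw [if_pos ⟨hyn, Nat.gcd_dvd_right q n⟩]
      rw [← heq]
      exact Finset.single_le_sum (fun d _ => hg0 d n) hmem
    · exact Finset.sum_nonneg fun d _ => hg0 d n
  have hinner : ∀ d ∈ q.divisors, ∑ n ∈ F, g d n ≤ 3 / Real.sqrt y := by
    intro d hd
    have hd0 : 0 < d := Nat.pos_of_mem_divisors hd
    have hd0' : (0:ℝ) < (d:ℝ) := by exact_mod_cast hd0
    have h1 : ∑ n ∈ F, g d n = ∑ n ∈ F.filter (fun n : ℕ => d ∣ n), g d n := by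
      rw [Finset.sum_filter_of_ne]
      intro n _ hn
      rw [hg] at hn; dsimp only at hn
      by_contra hdn
      exact hn (if_neg (fun hc => hdn hc.2))
    have hsub : F.filter (fun n : ℕ => d ∣ n) ⊆
        (F.image (fun n : ℕ => n / d)).image (fun m : ℕ => d * m) := by
      intro n hn
      rw [Finset.mem_filter] at hn
      rw [Finset.mem_image]
      exact ⟨n / d, Finset.mem_image.2 ⟨n, hn.1, rfl⟩, (Nat.mul_div_cancel' hn.2)⟩
    have h2 : ∑ n ∈ F.filter (fun n : ℕ => d ∣ n), g d n ≤
        ∑ n ∈ (F.image (fun n : ℕ => n / d)).image (fun m : ℕ => d * m), g d n :=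
      Finset.sum_le_sum_of_subset_of_nonneg hsub (fun n _ _ => hg0 d n)
    have h3 : ∑ n ∈ (F.image (fun n : ℕ => n / d)).image (fun m : ℕ => d * m), g d n
        = ∑ m ∈ F.image (fun n : ℕ => n / d), g d (d * m) :=
      Finset.sum_image (fun a _ b _ h => Nat.eq_of_mul_eq_mul_left hd0 h)
    have hval : ∀ m : ℕ, g d (d * m)
        = (1 / (d:ℝ)) * (if y / d < (m:ℝ) then 1 / (m:ℝ)^((3:ℝ)/2) else 0) := by
      intro m
      rw [hg]; dsimp only
      have hcond : (y < ((d * m : ℕ):ℝ) ∧ d ∣ d * m) ↔ y / d < (m:ℝ) := by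
        rw [div_lt_iff₀ hd0']
        push_cast
        constructor
        · intro h; linarith [h.1]
        · intro h; exact ⟨by linarith, Dvd.intro m rfl⟩
      by_cases hc : y / d < (m:ℝ)
      · rw [if_pos (hcond.2 hc), if_pos hc]
        push_cast
        rw [Real.mul_rpow hd0'.le (Nat.cast_nonneg m)]
        have hds : Real.sqrt d / (d:ℝ)^((3:ℝ)/2) = 1 / (d:ℝ) := by
          rw [Real.sqrt_eq_rpow, ← Real.rpow_sub hd0',
            show 1/(2:ℝ) - 3/2 = -1 by norm_num, Real.rpow_neg_one]
          exact (one_div _).symm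
        rw [show Real.sqrt d / ((d:ℝ)^((3:ℝ)/2) * (m:ℝ)^((3:ℝ)/2))
            = Real.sqrt d / (d:ℝ)^((3:ℝ)/2) * (1 / (m:ℝ)^((3:ℝ)/2)) from by ring, hds]
      · rw [if_neg (fun h => hc (hcond.1 h)), if_neg hc, mul_zero]
    have h4 : ∑ m ∈ F.image (fun n : ℕ => n / d), g d (d * m)
        = (1 / (d:ℝ)) * ∑ m ∈ F.image (fun n : ℕ => n / d),
            (if y / d < (m:ℝ) then 1 / (m:ℝ)^((3:ℝ)/2) else 0) := by
      rw [Finset.mul_sum]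
      exact Finset.sum_congr rfl fun m _ => hval m
    rw [h1]
    refine h2.trans ?_
    rw [h3, h4]
    rcases le_or_gt (d:ℝ) y with hdy | hdy
    · have hx1 : 1 ≤ y / d := (one_le_div hd0').2 hdy
      have hb := tail_sum_le (y / d) hx1 (F.image (fun n : ℕ => n / d))
      have hsd1 : 1 ≤ Real.sqrt d := by
        rw [show (1:ℝ) = Real.sqrt 1 by simp]
        exact Real.sqrt_le_sqrt (by exact_mod_cast hd0)
      have hsd0 : 0 < Real.sqrt d := by linarith
      have hdd : Real.sqrt d ≤ (d:ℝ) := by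
        nlinarith [Real.sq_sqrt hd0'.le]
      calc (1 / (d:ℝ)) * ∑ m ∈ F.image (fun n : ℕ => n / d),
            (if y / d < (m:ℝ) then 1 / (m:ℝ)^((3:ℝ)/2) else 0)
          ≤ (1 / (d:ℝ)) * (3 / Real.sqrt (y / d)) :=
            mul_le_mul_of_nonneg_left hb (by positivity)
        _ = 3 * Real.sqrt d / ((d:ℝ) * Real.sqrt y) := by
            rw [Real.sqrt_div hy0.le]
            field_simp
        _ ≤ 3 / Real.sqrt y := by
            rw [div_le_div_iff₀ (by positivity) hsy]
            nlinarith [mul_le_mul_of_nonneg_right hdd hsy.le]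
    · have hb := tail_sum_le' (y / d) (by positivity) (F.image (fun n : ℕ => n / d))
      have hyd : Real.sqrt y ≤ (d:ℝ) := by
        have h5 : Real.sqrt y ≤ y := by
          nlinarith [Real.sq_sqrt hy0.le, Real.sqrt_nonneg y]
        linarith
      calc (1 / (d:ℝ)) * ∑ m ∈ F.image (fun n : ℕ => n / d),
            (if y / d < (m:ℝ) then 1 / (m:ℝ)^((3:ℝ)/2) else 0)
          ≤ (1 / (d:ℝ)) * 3 := mul_le_mul_of_nonneg_left hb (by positivity)
        _ = 3 / (d:ℝ) := by ring
        _ ≤ 3 / Real.sqrt y := by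
            apply div_le_div_of_nonneg_left (by norm_num) hsy hyd
  calc ∑ n ∈ F, f n ≤ ∑ n ∈ F, ∑ d ∈ q.divisors, g d n :=
        Finset.sum_le_sum fun n _ => hpt n
    _ = ∑ d ∈ q.divisors, ∑ n ∈ F, g d n := Finset.sum_comm
    _ ≤ ∑ d ∈ q.divisors, 3 / Real.sqrt y := Finset.sum_le_sum hinner
    _ = 3 * (q.divisors.card : ℝ) / Real.sqrt y := by
        rw [Finset.sum_const, nsmul_eq_mul]
        ring
end

section
/- Let q, n be positive integers and x ≥ 1 a real number. Then the integral E_n = ∫₀^{√(x/2)} sin(2πnt/q) · t/√(x−t²) dt satisfies |E_n| ≪ q/n, with an absolute implied constant. -/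
theorem integral_bound : ∃ C : ℝ, 0 < C ∧ ∀ (q n : ℕ), 0 < q → 0 < n → ∀ (x : ℝ), 1 ≤ x →
    |∫ t in (0:ℝ)..(Real.sqrt (x/2)),
        Real.sin (2 * Real.pi * (n : ℝ) * t / q) * (t / Real.sqrt (x - t^2))| ≤
      C * q / n := by
  refine ⟨1, one_pos, fun q n hq hn x hx => ?_⟩
  have hπ := Real.pi_pos
  have hqR : (0:ℝ) < q := by exact_mod_cast hq
  have hnR : (0:ℝ) < n := by exact_mod_cast hn
  set a : ℝ := 2 * Real.pi * n / q with ha_def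
  have ha0 : 0 < a := by positivity
  set b : ℝ := Real.sqrt (x/2) with hb_def
  have hb0 : 0 < b := Real.sqrt_pos.mpr (by linarith)
  have hb2 : b ^ 2 = x / 2 := Real.sq_sqrt (by linarith)
  set s : ℝ → ℝ := fun t => Real.sqrt (x - t^2) with hs_def
  set f : ℝ → ℝ := fun t => t / s t with hf_def
  set f' : ℝ → ℝ := fun t => x / (s t)^3 with hf'_def
  set g : ℝ → ℝ := fun t => -Real.cos (a * t) / a with hg_def
  have huIcc : Set.uIcc (0:ℝ) b = Set.Icc 0 b := Set.uIcc_of_le hb0.le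
  have hpos : ∀ t ∈ Set.uIcc (0:ℝ) b, 0 < x - t^2 := by
    intro t ht
    rw [huIcc] at ht
    have h1 : t^2 ≤ b^2 := by nlinarith [ht.1, ht.2]
    rw [hb2] at h1; linarith
  have hs_pos : ∀ t ∈ Set.uIcc (0:ℝ) b, 0 < s t := fun t ht =>
    Real.sqrt_pos.mpr (hpos t ht)
  have hs_sq : ∀ t ∈ Set.uIcc (0:ℝ) b, (s t)^2 = x - t^2 := fun t ht =>
    Real.sq_sqrt (hpos t ht).le
  -- derivative of s
  have hs_deriv : ∀ t ∈ Set.uIcc (0:ℝ) b, HasDerivAt s (-t / s t) t := by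
    intro t ht
    have h1 : HasDerivAt (fun u : ℝ => x - u^2) (-(2*t)) t := by
      simpa using ((hasDerivAt_pow 2 t).const_sub x)
    have h2 := (Real.hasDerivAt_sqrt (hpos t ht).ne').comp t h1
    convert h2 using 1 <;> try rfl
    field_simp [hs_def]
    ring
  -- derivative of f
  have hf_deriv : ∀ t ∈ Set.uIcc (0:ℝ) b, HasDerivAt f (f' t) t := by
    intro t ht
    have hst := hs_pos t ht
    have h := (hasDerivAt_id t).div (hs_deriv t ht) hst.ne'
    convert h using 1 <;> try rfl
    rw [hf'_def]
    have hsq := hs_sq t ht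
    field_simp
    simp only [id]
    linear_combination (-1 : ℝ) * hsq
  -- derivative of g
  have hg_deriv : ∀ t ∈ Set.uIcc (0:ℝ) b, HasDerivAt g (Real.sin (a * t)) t := by
    intro t _
    have h1 : HasDerivAt (fun u : ℝ => a * u) a t := by
      simpa using (hasDerivAt_id t).const_mul a
    have h2 : HasDerivAt (fun u : ℝ => Real.cos (a * u)) (-Real.sin (a*t) * a) t :=
      (Real.hasDerivAt_cos (a*t)).comp t h1
    have h3 := (h2.neg).div_const a
    convert h3 using 1 <;> try rfl
    field_simp
  -- continuity of s, f'
  have hs_cont : ContinuousOn s (Set.uIcc (0:ℝ) b) :=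
    (continuousOn_const.sub (continuousOn_pow 2)).sqrt
  have hf'_cont : ContinuousOn f' (Set.uIcc (0:ℝ) b) := by
    apply continuousOn_const.div (hs_cont.pow 3)
    intro t ht
    exact pow_ne_zero 3 (hs_pos t ht).ne'
  have hf'_int : IntervalIntegrable f' MeasureTheory.volume 0 b :=
    hf'_cont.intervalIntegrable
  have hg_cont : ContinuousOn g (Set.uIcc (0:ℝ) b) :=
    (((Real.continuous_cos.comp (continuous_const.mul continuous_id)).neg.div_const a)).continuousOn
  have hfg_int : IntervalIntegrable (fun t => f' t * g t) MeasureTheory.volume 0 b :=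
    (hf'_cont.mul hg_cont).intervalIntegrable
  have hsin_int : IntervalIntegrable (fun t => Real.sin (a * t)) MeasureTheory.volume 0 b :=
    (Real.continuous_sin.comp (continuous_const.mul continuous_id)).intervalIntegrable 0 b
  -- integration by parts
  have hibp : ∫ t in (0:ℝ)..b, f t * Real.sin (a * t) =
      f b * g b - f 0 * g 0 - ∫ t in (0:ℝ)..b, f' t * g t :=
    intervalIntegral.integral_mul_deriv_eq_deriv_mul hf_deriv hg_deriv hf'_int hsin_int
  -- values at endpoints
  have hsb : s b = b := by
    rw [hs_def]
    simp only
    rw [hb2]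
    rw [show x - x/2 = x/2 by ring]
  have hfb : f b = 1 := by rw [hf_def]; simp only; rw [hsb, div_self hb0.ne']
  have hf0 : f 0 = 0 := by simp [hf_def]
  -- FTC: integral of f'
  have hftc : ∫ t in (0:ℝ)..b, f' t = 1 := by
    rw [intervalIntegral.integral_eq_sub_of_hasDerivAt
      (fun t ht => hf_deriv t ht) hf'_int, hfb, hf0, sub_zero]
  have hf'_nonneg : ∀ t ∈ Set.uIcc (0:ℝ) b, 0 ≤ f' t := by
    intro t ht
    exact div_nonneg (by linarith) (pow_nonneg (hs_pos t ht).le 3)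
  -- bound the boundary term
  have hgb : |g b| ≤ 1 / a := by
    rw [hg_def]
    simp only [abs_div, abs_neg, abs_of_pos ha0]
    gcongr
    exact Real.abs_cos_le_one _
  -- bound the remaining integral
  have hbound2 : |∫ t in (0:ℝ)..b, f' t * g t| ≤ 1 / a := by
    have h1 : ∀ t ∈ Set.uIcc (0:ℝ) b, |g t| ≤ 1 / a := by
      intro t _
      rw [hg_def]
      simp only [abs_div, abs_neg, abs_of_pos ha0]
      gcongr
      exact Real.abs_cos_le_one _
    have hle : |∫ t in (0:ℝ)..b, f' t * g t| ≤ ∫ t in (0:ℝ)..b, f' t * (1/a) := by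
      calc |∫ t in (0:ℝ)..b, f' t * g t| ≤ ∫ t in (0:ℝ)..b, |f' t| * |g t| := by
            simpa using intervalIntegral.norm_integral_le_integral_norm (μ := MeasureTheory.volume) (f := fun t => f' t * g t) hb0.le
        _ ≤ ∫ t in (0:ℝ)..b, f' t * (1/a) := by
            apply intervalIntegral.integral_mono_on hb0.le
            · exact (hf'_cont.abs.mul hg_cont.abs).intervalIntegrable
            · exact hf'_int.mul_const _
            · intro t ht
              rw [← huIcc] at ht
              rw [abs_of_nonneg (hf'_nonneg t ht)]
              exact mul_le_mul_of_nonneg_left (h1 t ht) (hf'_nonneg t ht)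
    calc |∫ t in (0:ℝ)..b, f' t * g t| ≤ ∫ t in (0:ℝ)..b, f' t * (1/a) := hle
      _ = (∫ t in (0:ℝ)..b, f' t) * (1/a) := by
            rw [intervalIntegral.integral_mul_const]
      _ = 1 / a := by rw [hftc, one_mul]
  -- rewrite the original integrand
  have hrw : (∫ t in (0:ℝ)..b, Real.sin (2 * Real.pi * (n:ℝ) * t / q) * (t / Real.sqrt (x - t^2)))
      = ∫ t in (0:ℝ)..b, f t * Real.sin (a * t) := by
    apply intervalIntegral.integral_congr
    intro t _
    have harg : 2 * Real.pi * (n:ℝ) * t / q = a * t := by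
      rw [ha_def]; field_simp
    simp only [hf_def, hs_def, harg]
    ring
  rw [hrw, hibp, hfb, hf0, one_mul, zero_mul, sub_zero]
  have : |g b - ∫ t in (0:ℝ)..b, f' t * g t| ≤ 1/a + 1/a :=
    (abs_sub _ _).trans (add_le_add hgb hbound2)
  have h2a : 1/a + 1/a = (q:ℝ) / (Real.pi * n) := by
    rw [ha_def]; field_simp; ring
  rw [h2a] at this
  refine this.trans ?_
  rw [one_mul]
  rw [div_le_div_iff₀ (by positivity) hnR]
  nlinarith [mul_pos hqR hnR, Real.pi_gt_three]
end

section
/- For every integer M ≥ 2 there exist complex coefficients c_n (n ∈ ℤ) with min(1, 1/(M‖y‖)) = Σ_{n∈ℤ} c_n e(ny) for all real y, satisfying c_n ≪ M^{−1} log M for all n and c_n ≪ M/n² for n ≠ 0, where ‖y‖ is the distance from y to the nearest integer and min(1, 1/0) is interpreted as 1. -/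
open Real intervalIntegral

namespace FourierMin

noncomputable def g (m y : ℝ) : ℝ := (max 1 (m * |y|))⁻¹

lemma g_den_ge_one (m y : ℝ) : 1 ≤ max 1 (m * |y|) := le_max_left _ _

lemma g_pos (m y : ℝ) : 0 < g m y := inv_pos.2 (lt_of_lt_of_le one_pos (g_den_ge_one m y))

lemma g_le_one (m y : ℝ) : g m y ≤ 1 := inv_le_one_of_one_le₀ (g_den_ge_one m y)

noncomputable def F (m : ℝ) : C(AddCircle (1:ℝ), ℂ) :=
  ⟨fun x => ((max 1 (m * ‖x‖))⁻¹ : ℝ), by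
    refine Complex.continuous_ofReal.comp (Continuous.inv₀ ?_ ?_)
    · exact continuous_const.max (continuous_const.mul continuous_norm)
    · intro x; positivity⟩

lemma F_coe {m : ℝ} (y : ℝ) : F m (y : AddCircle (1:ℝ)) = (g m (y - round y) : ℂ) := by
  have : ‖(y : AddCircle (1:ℝ))‖ = |y - round y| := UnitAddCircle.norm_eq
  simp [F, g, this]

end FourierMin

namespace FourierMin

lemma abs_sub_round_eq {x : ℝ} (hx : x ∈ Set.uIcc (-(2⁻¹):ℝ) 2⁻¹) :
    |x - round x| = |x| := by
  rw [Set.uIcc_of_le (by norm_num)] at hx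
  obtain ⟨h1, h2⟩ := hx
  rcases eq_or_lt_of_le h2 with h | h
  · subst x
    have : round (2⁻¹ : ℝ) = 1 := by
      rw [round_eq]
      norm_num
    rw [this]
    norm_num
  · have : round x = 0 := by
      rw [round_eq, Int.floor_eq_zero_iff]
      constructor <;> simp <;> linarith
    simp [this]

lemma coeff_eq (m : ℝ) (n : ℤ) :
    haveI : Fact ((0:ℝ) < 1) := ⟨one_pos⟩
    fourierCoeff (⇑(F m)) n
      = ∫ x in (-(2⁻¹):ℝ)..(2⁻¹), (fourier (-n) (x : AddCircle (1:ℝ)) : ℂ) * (g m x : ℂ) := by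
  haveI : Fact ((0:ℝ) < 1) := ⟨one_pos⟩
  rw [fourierCoeff_eq_intervalIntegral _ n (-(2⁻¹))]
  rw [show (-(2⁻¹) + 1 : ℝ) = 2⁻¹ by norm_num]
  rw [one_div_one, one_smul]
  refine intervalIntegral.integral_congr fun x hx => ?_
  rw [smul_eq_mul, F_coe]
  congr 2
  simp [g, abs_sub_round_eq hx]

end FourierMin

namespace FourierMin

variable {m : ℝ}

lemma g_cont (m : ℝ) : Continuous (g m) := by
  unfold g
  refine Continuous.inv₀ (continuous_const.max (continuous_const.mul continuous_abs)) ?_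
  intro x; positivity

lemma g_eq_on_right (hm : 2 ≤ m) {x : ℝ} (h1 : m⁻¹ ≤ x) : g m x = m⁻¹ * x⁻¹ := by
  have hm0 : (0:ℝ) < m := by linarith
  have hx0 : 0 < x := lt_of_lt_of_le (by positivity) h1
  have : (1:ℝ) ≤ m * x := by
    rw [← mul_inv_cancel₀ hm0.ne']
    exact mul_le_mul_of_nonneg_left h1 hm0.le
  rw [g, abs_of_pos hx0, max_eq_right this, mul_inv]

lemma g_eq_on_mid (hm : 2 ≤ m) {x : ℝ} (h1 : |x| ≤ m⁻¹) : g m x = 1 := by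
  have hm0 : (0:ℝ) < m := by linarith
  have : m * |x| ≤ 1 := by
    calc m * |x| ≤ m * m⁻¹ := mul_le_mul_of_nonneg_left h1 hm0.le
    _ = 1 := mul_inv_cancel₀ hm0.ne'
  rw [g, max_eq_left this, inv_one]

lemma g_neg (m x : ℝ) : g m (-x) = g m x := by simp [g]

lemma half_facts (hm : 2 ≤ m) : (0:ℝ) < m⁻¹ ∧ m⁻¹ ≤ 2⁻¹ := by
  have hm0 : (0:ℝ) < m := by linarith
  exact ⟨by positivity, by
    rw [inv_le_inv₀ hm0 (by norm_num)]; exact hm⟩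

lemma integral_g_right (hm : 2 ≤ m) :
    ∫ x in (m⁻¹ : ℝ)..2⁻¹, g m x = m⁻¹ * Real.log (m / 2) := by
  obtain ⟨h0, hh⟩ := half_facts hm
  rw [intervalIntegral.integral_congr (g := fun x => m⁻¹ * x⁻¹) ?_]
  · rw [intervalIntegral.integral_const_mul, integral_inv ?_]
    · have hm0 : (0:ℝ) < m := by linarith
      have : (2⁻¹ / m⁻¹ : ℝ) = m / 2 := by
        field_simp
      rw [this]
    · rw [Set.uIcc_of_le hh]
      intro hmem
      exact absurd hmem.1 (by simpa using h0)
  · intro x hx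
    rw [Set.uIcc_of_le hh] at hx
    exact g_eq_on_right hm hx.1

lemma integral_g_total (hm : 2 ≤ m) :
    ∫ x in (-(2⁻¹):ℝ)..2⁻¹, g m x = 2 * m⁻¹ + 2 * m⁻¹ * Real.log (m / 2) := by
  obtain ⟨h0, hh⟩ := half_facts hm
  have hInt : ∀ a b : ℝ, IntervalIntegrable (g m) MeasureTheory.volume a b :=
    fun a b => (g_cont m).intervalIntegrable a b
  have split1 : ∫ x in (-(2⁻¹):ℝ)..2⁻¹, g m x
      = (∫ x in (-(2⁻¹):ℝ)..(-(m⁻¹)), g m x) + ((∫ x in (-(m⁻¹):ℝ)..m⁻¹, g m x)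
        + ∫ x in (m⁻¹:ℝ)..2⁻¹, g m x) := by
    rw [intervalIntegral.integral_add_adjacent_intervals (hInt _ _) (hInt _ _),
      intervalIntegral.integral_add_adjacent_intervals (hInt _ _) (hInt _ _)]
  have left_eq : (∫ x in (-(2⁻¹):ℝ)..(-(m⁻¹)), g m x) = ∫ x in (m⁻¹:ℝ)..2⁻¹, g m x := by
    rw [← intervalIntegral.integral_comp_neg (fun x => g m x)]
    refine intervalIntegral.integral_congr fun x hx => g_neg m x
  have mid_eq : (∫ x in (-(m⁻¹):ℝ)..m⁻¹, g m x) = 2 * m⁻¹ := by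
    rw [intervalIntegral.integral_congr (g := fun _ => (1:ℝ)) ?_]
    · simp
      ring
    · intro x hx
      rw [Set.uIcc_of_le (by linarith)] at hx
      exact g_eq_on_mid hm (abs_le.2 ⟨hx.1, hx.2⟩)
  rw [split1, left_eq, mid_eq, integral_g_right hm]
  ring

end FourierMin

namespace FourierMin

lemma norm_coeff_le {m : ℝ} (hm : 2 ≤ m) (n : ℤ) :
    haveI : Fact ((0:ℝ) < 1) := ⟨one_pos⟩
    ‖fourierCoeff (⇑(F m)) n‖ ≤ (2 + 2 * Real.log m) / m := by
  haveI : Fact ((0:ℝ) < 1) := ⟨one_pos⟩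
  have hm0 : (0:ℝ) < m := by linarith
  rw [coeff_eq]
  calc ‖∫ x in (-(2⁻¹):ℝ)..(2⁻¹), (fourier (-n) (x : AddCircle (1:ℝ)) : ℂ) * (g m x : ℂ)‖
      ≤ ∫ x in (-(2⁻¹):ℝ)..(2⁻¹), ‖(fourier (-n) (x : AddCircle (1:ℝ)) : ℂ) * (g m x : ℂ)‖ :=
        intervalIntegral.norm_integral_le_integral_norm (by norm_num)
    _ = ∫ x in (-(2⁻¹):ℝ)..(2⁻¹), g m x := by
        refine intervalIntegral.integral_congr fun x hx => ?_
        have h1 : ‖(fourier (-n) (x : AddCircle (1:ℝ)) : ℂ)‖ = 1 := Circle.norm_coe _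
        rw [norm_mul, h1, one_mul, Complex.norm_real, Real.norm_eq_abs,
          abs_of_pos (g_pos m x)]
    _ = 2 * m⁻¹ + 2 * m⁻¹ * Real.log (m / 2) := integral_g_total hm
    _ ≤ (2 + 2 * Real.log m) / m := by
        have h1 : Real.log (m * 2⁻¹) ≤ Real.log m := by
          apply Real.log_le_log (by positivity)
          linarith
        have h2 : (0:ℝ) < m⁻¹ := by positivity
        calc 2 * m⁻¹ + 2 * m⁻¹ * Real.log (m * 2⁻¹)
            ≤ 2 * m⁻¹ + 2 * m⁻¹ * Real.log m := by nlinarith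
          _ = (2 + 2 * Real.log m) / m := by ring

end FourierMin

namespace FourierMin

lemma coeff_formula {m : ℝ} (hm : 2 ≤ m) {n : ℤ} (hn : n ≠ 0) :
    haveI : Fact ((0:ℝ) < 1) := ⟨one_pos⟩
    fourierCoeff (⇑(F m)) n =
      ((2 * Real.sin (2*π*n*m⁻¹) * (2*π*n)⁻¹
        + 2 * m⁻¹ * ∫ x in (m⁻¹:ℝ)..2⁻¹, x⁻¹ * Real.cos (2*π*n*x) : ℝ) : ℂ) := by
  haveI : Fact ((0:ℝ) < 1) := ⟨one_pos⟩
  have hπ := Real.pi_pos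
  have hm0 : (0:ℝ) < m := by linarith
  obtain ⟨h0, hh⟩ := half_facts hm
  set ω : ℝ := 2*π*n with hωdef
  have hωne : ω ≠ 0 := by
    simp only [hωdef]
    have : (n:ℝ) ≠ 0 := Int.cast_ne_zero.2 hn
    positivity
  set cC : ℂ := -((ω:ℝ):ℂ) * Complex.I with hcCdef
  have hcC : cC ≠ 0 := by
    simp [hcCdef, Complex.ext_iff, hωne]
  rw [coeff_eq]
  have hintg : ∀ x : ℝ, (fourier (-n) (x : AddCircle (1:ℝ)) : ℂ) * (g m x : ℂ)
      = Complex.exp (cC * x) * (g m x : ℂ) := by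
    intro x
    congr 1
    rw [fourier_coe_apply]
    congr 1
    simp only [hcCdef, hωdef]
    push_cast
    ring
  simp only [hintg]
  have hcont : Continuous fun x : ℝ => Complex.exp (cC * x) * (g m x : ℂ) := by
    apply Continuous.mul
    · exact Complex.continuous_exp.comp (continuous_const.mul Complex.continuous_ofReal)
    · exact Complex.continuous_ofReal.comp (g_cont m)
  have hInt : ∀ a b : ℝ, IntervalIntegrable (fun x : ℝ => Complex.exp (cC * x) * (g m x : ℂ))
      MeasureTheory.volume a b := fun a b => hcont.intervalIntegrable a b
  have split1 : (∫ x in (-(2⁻¹):ℝ)..(2⁻¹), Complex.exp (cC * x) * (g m x : ℂ))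
      = (∫ x in (-(2⁻¹):ℝ)..(-(m⁻¹)), Complex.exp (cC * x) * (g m x : ℂ))
        + ((∫ x in (-(m⁻¹):ℝ)..(m⁻¹), Complex.exp (cC * x) * (g m x : ℂ))
        + ∫ x in (m⁻¹:ℝ)..(2⁻¹), Complex.exp (cC * x) * (g m x : ℂ)) := by
    rw [intervalIntegral.integral_add_adjacent_intervals (hInt _ _) (hInt _ _),
      intervalIntegral.integral_add_adjacent_intervals (hInt _ _) (hInt _ _)]
  rw [split1]
  -- middle piece
  have mid : (∫ x in (-(m⁻¹):ℝ)..(m⁻¹), Complex.exp (cC * x) * (g m x : ℂ))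
      = ((2 * Real.sin (ω*m⁻¹) * ω⁻¹ : ℝ) : ℂ) := by
    have congr1 : (∫ x in (-(m⁻¹):ℝ)..(m⁻¹), Complex.exp (cC * x) * (g m x : ℂ))
        = ∫ x in (-(m⁻¹):ℝ)..(m⁻¹), Complex.exp (cC * x) := by
      refine intervalIntegral.integral_congr fun x hx => ?_
      rw [Set.uIcc_of_le (by linarith)] at hx
      rw [g_eq_on_mid hm (abs_le.2 ⟨hx.1, hx.2⟩)]
      simp
    rw [congr1, integral_exp_mul_complex hcC]
    have h1 : cC * ((m⁻¹:ℝ):ℂ) = ((-(ω*m⁻¹) : ℝ):ℂ) * Complex.I := by push_cast; ring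
    have h2 : cC * ((-(m⁻¹):ℝ):ℂ) = (((ω*m⁻¹) : ℝ):ℂ) * Complex.I := by push_cast; ring
    rw [h1, h2, Complex.exp_mul_I, Complex.exp_mul_I]
    rw [div_eq_iff hcC]
    push_cast
    simp only [Complex.cos_neg, Complex.sin_neg]
    have hωC : ((ω:ℝ):ℂ) ≠ 0 := Complex.ofReal_ne_zero.2 hωne
    field_simp
    ring
  rw [mid]
  -- left piece
  have hcont2 : ∀ c : ℂ, Continuous fun x : ℝ => Complex.exp (c * x) * (g m x : ℂ) := by
    intro c
    apply Continuous.mul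
    · exact Complex.continuous_exp.comp (continuous_const.mul Complex.continuous_ofReal)
    · exact Complex.continuous_ofReal.comp (g_cont m)
  have left : (∫ x in (-(2⁻¹):ℝ)..(-(m⁻¹)), Complex.exp (cC * x) * (g m x : ℂ))
      = ∫ x in (m⁻¹:ℝ)..(2⁻¹), Complex.exp (-cC * x) * (g m x : ℂ) := by
    rw [← intervalIntegral.integral_comp_neg (fun x => Complex.exp (cC * x) * (g m x : ℂ))]
    refine intervalIntegral.integral_congr fun x hx => ?_
    rw [g_neg]
    congr 1
    congr 1
    push_cast
    ring
  rw [left]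
  have right_comb : (∫ x in (m⁻¹:ℝ)..(2⁻¹), Complex.exp (-cC * x) * (g m x : ℂ))
      + (∫ x in (m⁻¹:ℝ)..(2⁻¹), Complex.exp (cC * x) * (g m x : ℂ))
      = ((2 * m⁻¹ * ∫ x in (m⁻¹:ℝ)..2⁻¹, x⁻¹ * Real.cos (ω*x) : ℝ) : ℂ) := by
    rw [← intervalIntegral.integral_add ((hcont2 _).intervalIntegrable _ _)
      ((hcont2 _).intervalIntegrable _ _)]
    have congr2 : ∀ x ∈ Set.uIcc (m⁻¹:ℝ) 2⁻¹,
        Complex.exp (-cC * x) * (g m x : ℂ) + Complex.exp (cC * x) * (g m x : ℂ)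
        = ((2 * m⁻¹ * (x⁻¹ * Real.cos (ω*x)) : ℝ) : ℂ) := by
      intro x hx
      rw [Set.uIcc_of_le hh] at hx
      rw [g_eq_on_right hm hx.1]
      have e1 : cC * (x:ℂ) = ((-(ω*x) : ℝ):ℂ) * Complex.I := by push_cast; ring
      have e2 : -cC * (x:ℂ) = (((ω*x) : ℝ):ℂ) * Complex.I := by push_cast; ring
      rw [e1, e2, Complex.exp_mul_I, Complex.exp_mul_I]
      push_cast
      simp only [Complex.cos_neg, Complex.sin_neg]
      ring
    rw [intervalIntegral.integral_congr congr2]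
    rw [intervalIntegral.integral_ofReal]
    rw [intervalIntegral.integral_const_mul]
  rw [add_comm (((2 * Real.sin (ω*m⁻¹) * ω⁻¹ : ℝ) : ℂ)) _, ← add_assoc, right_comb]
  push_cast
  ring

end FourierMin

namespace FourierMin

lemma uIcc_pos {m : ℝ} (hm : 2 ≤ m) : ∀ x ∈ Set.uIcc (m⁻¹:ℝ) 2⁻¹, 0 < x := by
  obtain ⟨h0, hh⟩ := half_facts hm
  rw [Set.uIcc_of_le hh]
  intro x hx
  linarith [hx.1]

lemma J_eq {m : ℝ} (hm : 2 ≤ m) {ω : ℝ} (hω : ω ≠ 0) (hω2 : Real.sin (ω * 2⁻¹) = 0) :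
    (∫ x in (m⁻¹:ℝ)..2⁻¹, x⁻¹ * Real.cos (ω*x))
      = -(m * Real.sin (ω*m⁻¹)) * ω⁻¹
        + ω⁻¹ * ∫ x in (m⁻¹:ℝ)..2⁻¹, (x^2)⁻¹ * Real.sin (ω*x) := by
  obtain ⟨h0, hh⟩ := half_facts hm
  have hm0 : (0:ℝ) < m := by linarith
  have hpos := uIcc_pos hm
  have hu : ∀ x ∈ Set.uIcc (m⁻¹:ℝ) 2⁻¹, HasDerivAt (fun y : ℝ => y⁻¹) (-((x:ℝ)^2)⁻¹) x :=
    fun x hx => hasDerivAt_inv (hpos x hx).ne'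
  have hv : ∀ x ∈ Set.uIcc (m⁻¹:ℝ) 2⁻¹,
      HasDerivAt (fun y : ℝ => ω⁻¹ * Real.sin (ω*y)) (Real.cos (ω*x)) x := by
    intro x _
    have h1 : HasDerivAt (fun y : ℝ => ω * y) (ω * 1) x := (hasDerivAt_id x).const_mul ω
    have h2 := ((Real.hasDerivAt_sin (ω*x)).comp x h1).const_mul ω⁻¹
    have h3 : ω⁻¹ * (Real.cos (ω*x) * (ω * 1)) = Real.cos (ω*x) := by field_simp
    rw [h3] at h2
    exact h2
  have hu' : IntervalIntegrable (fun x : ℝ => -((x:ℝ)^2)⁻¹) MeasureTheory.volume m⁻¹ 2⁻¹ := by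
    apply ContinuousOn.intervalIntegrable
    exact (((continuousOn_id.pow 2).inv₀ fun x hx => (pow_pos (hpos x hx) 2).ne').neg)
  have hv' : IntervalIntegrable (fun x : ℝ => Real.cos (ω*x)) MeasureTheory.volume m⁻¹ 2⁻¹ :=
    (Real.continuous_cos.comp (continuous_const.mul continuous_id)).intervalIntegrable _ _
  have ibp := intervalIntegral.integral_mul_deriv_eq_deriv_mul hu hv hu' hv'
  rw [ibp, hω2]
  have heq : ∀ x : ℝ, -((x:ℝ)^2)⁻¹ * (ω⁻¹ * Real.sin (ω*x))
      = -ω⁻¹ * (((x:ℝ)^2)⁻¹ * Real.sin (ω*x)) := fun x => by ring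
  simp only [heq]
  rw [intervalIntegral.integral_const_mul, inv_inv m]
  ring

end FourierMin

namespace FourierMin

lemma integral_cube_inv {m : ℝ} (hm : 2 ≤ m) :
    ∫ x in (m⁻¹:ℝ)..2⁻¹, ((x:ℝ)^3)⁻¹ = (m^2 - 4)/2 := by
  obtain ⟨h0, hh⟩ := half_facts hm
  have hm0 : (0:ℝ) < m := by linarith
  have h05 : (0:ℝ) ∉ Set.uIcc (m⁻¹:ℝ) 2⁻¹ := fun h => absurd (uIcc_pos hm 0 h) (lt_irrefl 0)
  have hz := integral_zpow (a := m⁻¹) (b := 2⁻¹) (n := -3) (Or.inr ⟨by norm_num, h05⟩)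
  have heq : ∀ x : ℝ, (x:ℝ) ^ (-3 : ℤ) = ((x:ℝ)^3)⁻¹ := fun x => by
    rw [zpow_neg]
    norm_cast
  simp only [heq] at hz
  rw [hz]
  have e1 : ((2:ℝ)⁻¹) ^ ((-3:ℤ) + 1) = 4 := by norm_num
  have e2 : (m⁻¹) ^ ((-3:ℤ) + 1) = m^2 := by
    rw [show ((-3:ℤ) + 1) = -2 by norm_num, zpow_neg]
    norm_cast
    rw [inv_pow, inv_inv]
  rw [e1, e2]
  norm_num
  ring

lemma K_bound {m : ℝ} (hm : 2 ≤ m) {ω : ℝ} (hω : ω ≠ 0) :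
    |∫ x in (m⁻¹:ℝ)..2⁻¹, ((x:ℝ)^2)⁻¹ * Real.sin (ω*x)| ≤ 2 * m^2 * |ω|⁻¹ := by
  obtain ⟨h0, hh⟩ := half_facts hm
  have hm0 : (0:ℝ) < m := by linarith
  have hpos := uIcc_pos hm
  -- integration by parts
  have hu : ∀ x ∈ Set.uIcc (m⁻¹:ℝ) 2⁻¹,
      HasDerivAt (fun y : ℝ => ((y:ℝ)^2)⁻¹) (-(2*x) / ((x:ℝ)^2)^2) x := by
    intro x hx
    have := (hasDerivAt_pow 2 x).inv (pow_ne_zero 2 (hpos x hx).ne')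
    simp at this
    exact this
  have hv : ∀ x ∈ Set.uIcc (m⁻¹:ℝ) 2⁻¹,
      HasDerivAt (fun y : ℝ => -(ω⁻¹ * Real.cos (ω*y))) (Real.sin (ω*x)) x := by
    intro x _
    have h1 : HasDerivAt (fun y : ℝ => ω * y) (ω * 1) x := (hasDerivAt_id x).const_mul ω
    have h2 := (((Real.hasDerivAt_cos (ω*x)).comp x h1).const_mul ω⁻¹).neg
    have h3 : -(ω⁻¹ * (-Real.sin (ω*x) * (ω * 1))) = Real.sin (ω*x) := by field_simp
    rw [h3] at h2
    exact h2
  have hu' : IntervalIntegrable (fun x : ℝ => -(2*x) / ((x:ℝ)^2)^2)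
      MeasureTheory.volume m⁻¹ 2⁻¹ := by
    apply ContinuousOn.intervalIntegrable
    apply ContinuousOn.div
    · fun_prop
    · fun_prop
    · exact fun x hx => (pow_pos (pow_pos (hpos x hx) 2) 2).ne'
  have hv' : IntervalIntegrable (fun x : ℝ => Real.sin (ω*x)) MeasureTheory.volume m⁻¹ 2⁻¹ :=
    (Real.continuous_sin.comp (continuous_const.mul continuous_id)).intervalIntegrable _ _
  have ibp := intervalIntegral.integral_mul_deriv_eq_deriv_mul hu hv hu' hv'
  rw [ibp]
  -- bound the remaining integral
  have hL : |∫ x in (m⁻¹:ℝ)..2⁻¹, (-(2*x) / ((x:ℝ)^2)^2) * (-(ω⁻¹ * Real.cos (ω*x)))|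
      ≤ |ω|⁻¹ * (m^2 - 4) := by
    have hab : (m⁻¹:ℝ) ≤ 2⁻¹ := hh
    calc |∫ x in (m⁻¹:ℝ)..2⁻¹, (-(2*x) / ((x:ℝ)^2)^2) * (-(ω⁻¹ * Real.cos (ω*x)))|
        ≤ ∫ x in (m⁻¹:ℝ)..2⁻¹, |(-(2*x) / ((x:ℝ)^2)^2) * (-(ω⁻¹ * Real.cos (ω*x)))| :=
          intervalIntegral.abs_integral_le_integral_abs hab
      _ ≤ ∫ x in (m⁻¹:ℝ)..2⁻¹, 2 * |ω|⁻¹ * ((x:ℝ)^3)⁻¹ := by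
          apply intervalIntegral.integral_mono_on hab
          · apply ContinuousOn.intervalIntegrable
            apply ContinuousOn.abs
            apply ContinuousOn.mul
            · apply ContinuousOn.div
              · fun_prop
              · fun_prop
              · exact fun x hx => (pow_pos (pow_pos (hpos x hx) 2) 2).ne'
            · fun_prop
          · apply ContinuousOn.intervalIntegrable
            apply ContinuousOn.mul
            · fun_prop
            · exact (continuousOn_id.pow 3).inv₀ fun x hx => (pow_pos (hpos x hx) 3).ne'
          · intro x hx
            have hx0 : 0 < x := hpos x (Set.mem_uIcc_of_le hx.1 hx.2)
            have hcos : |Real.cos (ω*x)| ≤ 1 := Real.abs_cos_le_one _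
            have h2x : |(-(2*x) / ((x:ℝ)^2)^2)| = 2*x/((x:ℝ)^2)^2 := by
              rw [abs_div, abs_neg, abs_of_pos (by positivity : (0:ℝ) < 2*x),
                abs_of_pos (by positivity : (0:ℝ) < ((x:ℝ)^2)^2)]
            rw [abs_mul, h2x, abs_neg, abs_mul]
            calc 2 * x / (x^2)^2 * (|ω⁻¹| * |Real.cos (ω*x)|)
                ≤ 2 * x / (x^2)^2 * (|ω⁻¹| * 1) := by
                  apply mul_le_mul_of_nonneg_left
                  · exact mul_le_mul_of_nonneg_left hcos (abs_nonneg _)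
                  · positivity
              _ = 2 * |ω|⁻¹ * ((x:ℝ)^3)⁻¹ := by
                  rw [abs_inv]
                  field_simp
      _ = |ω|⁻¹ * (m^2 - 4) := by
          rw [intervalIntegral.integral_const_mul, integral_cube_inv hm]
          ring
  have hb1 : |((2⁻¹:ℝ)^2)⁻¹ * -(ω⁻¹ * Real.cos (ω*2⁻¹))| ≤ 4 * |ω|⁻¹ := by
    rw [abs_mul, abs_neg, abs_mul, abs_inv ω]
    have h4 : |((2⁻¹:ℝ)^2)⁻¹| = 4 := by norm_num
    rw [h4]
    nlinarith [Real.abs_cos_le_one (ω*2⁻¹), inv_nonneg.2 (abs_nonneg ω),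
      abs_nonneg (Real.cos (ω*2⁻¹))]
  have hb2 : |((m⁻¹:ℝ)^2)⁻¹ * -(ω⁻¹ * Real.cos (ω*m⁻¹))| ≤ m^2 * |ω|⁻¹ := by
    rw [abs_mul, abs_neg, abs_mul, abs_inv ω]
    have h1 : |((m⁻¹:ℝ)^2)⁻¹| = m^2 := by
      rw [abs_of_pos (by positivity), inv_pow, inv_inv]
    rw [h1]
    calc m^2 * (|ω|⁻¹ * |Real.cos (ω*m⁻¹)|) ≤ m^2 * (|ω|⁻¹ * 1) := by
          gcongr
          exact Real.abs_cos_le_one _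
      _ = m^2 * |ω|⁻¹ := by ring
  calc |((2⁻¹:ℝ)^2)⁻¹ * -(ω⁻¹ * Real.cos (ω*2⁻¹)) - ((m⁻¹:ℝ)^2)⁻¹ * -(ω⁻¹ * Real.cos (ω*m⁻¹))
        - ∫ x in (m⁻¹:ℝ)..2⁻¹, (-(2*x) / ((x:ℝ)^2)^2) * (-(ω⁻¹ * Real.cos (ω*x)))|
      ≤ |((2⁻¹:ℝ)^2)⁻¹ * -(ω⁻¹ * Real.cos (ω*2⁻¹))| + |((m⁻¹:ℝ)^2)⁻¹ * -(ω⁻¹ * Real.cos (ω*m⁻¹))|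
        + |∫ x in (m⁻¹:ℝ)..2⁻¹, (-(2*x) / ((x:ℝ)^2)^2) * (-(ω⁻¹ * Real.cos (ω*x)))| := by
        calc _ ≤ |((2⁻¹:ℝ)^2)⁻¹ * -(ω⁻¹ * Real.cos (ω*2⁻¹)) - ((m⁻¹:ℝ)^2)⁻¹ * -(ω⁻¹ * Real.cos (ω*m⁻¹))|
            + |∫ x in (m⁻¹:ℝ)..2⁻¹, (-(2*x) / ((x:ℝ)^2)^2) * (-(ω⁻¹ * Real.cos (ω*x)))| :=
              abs_sub _ _
          _ ≤ _ := by
              have := abs_sub (((2⁻¹:ℝ)^2)⁻¹ * -(ω⁻¹ * Real.cos (ω*2⁻¹))) (((m⁻¹:ℝ)^2)⁻¹ * -(ω⁻¹ * Real.cos (ω*m⁻¹)))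
              linarith
    _ ≤ 4 * |ω|⁻¹ + m^2 * |ω|⁻¹ + |ω|⁻¹ * (m^2 - 4) := by
        linarith
    _ = 2 * m^2 * |ω|⁻¹ := by ring

end FourierMin

namespace FourierMin

lemma norm_coeff_le2 {m : ℝ} (hm : 2 ≤ m) {n : ℤ} (hn : n ≠ 0) :
    haveI : Fact ((0:ℝ) < 1) := ⟨one_pos⟩
    ‖fourierCoeff (⇑(F m)) n‖ ≤ 6 * m / (n:ℝ)^2 := by
  haveI : Fact ((0:ℝ) < 1) := ⟨one_pos⟩
  have hπ := Real.pi_pos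
  have hm0 : (0:ℝ) < m := by linarith
  have hnR : (n:ℝ) ≠ 0 := Int.cast_ne_zero.2 hn
  rw [coeff_formula hm hn, Complex.norm_real, Real.norm_eq_abs]
  set ω : ℝ := 2*π*(n:ℝ) with hωdef
  have hωne : ω ≠ 0 := by
    simp only [hωdef]
    positivity
  have hω2 : Real.sin (ω*2⁻¹) = 0 := by
    have h : ω * 2⁻¹ = (n:ℝ) * π := by rw [hωdef]; ring
    rw [h, Real.sin_int_mul_pi]
  rw [J_eq hm hωne hω2]
  set K := ∫ x in (m⁻¹:ℝ)..2⁻¹, ((x:ℝ)^2)⁻¹ * Real.sin (ω*x) with hK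
  have hsimp : 2 * Real.sin (ω*m⁻¹) * ω⁻¹
      + 2*m⁻¹ * (-(m * Real.sin (ω*m⁻¹)) * ω⁻¹ + ω⁻¹ * K) = 2*m⁻¹*ω⁻¹*K := by
    field_simp
    ring
  rw [hsimp]
  have hKb := K_bound hm hωne (m := m)
  have habs : |2*m⁻¹*ω⁻¹*K| = 2*m⁻¹*(|ω|⁻¹ * |K|) := by
    rw [abs_mul, abs_mul, abs_mul, abs_inv, abs_inv]
    rw [abs_of_pos (by norm_num : (0:ℝ) < 2), abs_of_pos hm0]
    ring
  rw [habs]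
  calc 2*m⁻¹*(|ω|⁻¹ * |K|) ≤ 2*m⁻¹*(|ω|⁻¹ * (2*m^2*|ω|⁻¹)) := by
        gcongr
      _ = 4*m*((|ω|^2)⁻¹) := by field_simp; ring
      _ = 4*m/(ω^2) := by rw [sq_abs]; ring
      _ ≤ 6 * m / (n:ℝ)^2 := by
        rw [div_le_div_iff₀ (by positivity) (by positivity)]
        have hπ3 : (3:ℝ) < π := Real.pi_gt_three
        have hn2 : (0:ℝ) < (n:ℝ)^2 := by positivity
        have : ω^2 = 4*π^2*(n:ℝ)^2 := by rw [hωdef]; ring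
        rw [this]
        have h9 : (9:ℝ) < π^2 := by nlinarith
        have hmn : 0 < m * (n:ℝ)^2 := mul_pos hm0 hn2
        nlinarith [mul_lt_mul_of_pos_left h9 hmn]

end FourierMin

namespace FourierMin

lemma summable_coeff {m : ℝ} (hm : 2 ≤ m) :
    haveI : Fact ((0:ℝ) < 1) := ⟨one_pos⟩
    Summable (fourierCoeff (⇑(F m))) := by
  haveI : Fact ((0:ℝ) < 1) := ⟨one_pos⟩
  have h2 : Summable (fun n : ℤ => 1/(n:ℝ)^2) := summable_one_div_int_pow.2 one_lt_two
  have hs : Summable (fun n : ℤ => 6*m/(n:ℝ)^2) := by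
    simpa [div_eq_mul_inv] using h2.mul_left (6*m)
  refine Summable.of_norm_bounded_eventually hs ?_
  refine Set.Finite.subset (Set.finite_singleton 0) ?_
  intro n hn
  simp only [Set.mem_setOf_eq, Set.mem_singleton_iff] at hn ⊢
  by_contra h
  refine hn ?_
  show ‖fourierCoeff (⇑(F m)) n‖ ≤ 6 * m / (n:ℝ)^2
  exact norm_coeff_le2 hm h

lemma lhs_eq {m : ℝ} (hm : 2 ≤ m) (y : ℝ) :
    (((if |y - round y| = 0 then (1 : ℝ)
        else min 1 (1 / (m * |y - round y|))) : ℝ) : ℂ) = F m (y : AddCircle (1:ℝ)) := by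
  have hm0 : (0:ℝ) < m := by linarith
  rw [F_coe]
  norm_cast
  set s : ℝ := y - round y with hs
  by_cases h : |s| = 0
  · rw [if_pos h]
    rw [g, h, mul_zero, max_eq_left (by norm_num : (0:ℝ) ≤ 1)]
    norm_num
  · rw [if_neg h]
    have hs0 : 0 < |s| := lt_of_le_of_ne (abs_nonneg s) (Ne.symm h)
    rcases le_total (m * |s|) 1 with h1 | h1
    · rw [g, max_eq_left h1]
      rw [min_eq_left]
      · norm_num
      · rw [le_div_iff₀ (by positivity)]
        linarith
    · rw [g, max_eq_right h1]
      rw [min_eq_right]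
      · rw [one_div]
      · rw [div_le_one (by positivity)]
        linarith

end FourierMin

theorem fourier_expansion_min : ∃ C : ℝ, 0 < C ∧
    ∀ (M : ℕ), 2 ≤ M → ∃ c : ℤ → ℂ,
      (∀ y : ℝ,
        (((if |y - round y| = 0 then (1 : ℝ)
          else min 1 (1 / (M * |y - round y|))) : ℝ) : ℂ) = ∑' n : ℤ, c n * e (n * y)) ∧
      (∀ n : ℤ, ‖c n‖ ≤ C * Real.log M / M) ∧
      (∀ n : ℤ, n ≠ 0 → ‖c n‖ ≤ C * M / (n : ℝ)^2) := by
  haveI : Fact ((0:ℝ) < 1) := ⟨one_pos⟩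
  refine ⟨6, by norm_num, fun M hM => ?_⟩
  have hm : (2:ℝ) ≤ (M:ℝ) := by exact_mod_cast hM
  have hm0 : (0:ℝ) < (M:ℝ) := by linarith
  refine ⟨fourierCoeff (⇑(FourierMin.F (M:ℝ))), ?_, ?_, ?_⟩
  · intro y
    have hsum := FourierMin.summable_coeff hm
    have hps := has_pointwise_sum_fourier_series_of_summable hsum (y : AddCircle (1:ℝ))
    have htsum := hps.tsum_eq
    have hterm : ∀ n : ℤ,
        fourierCoeff (⇑(FourierMin.F (M:ℝ))) n • fourier n ((y : ℝ) : AddCircle (1:ℝ))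
          = fourierCoeff (⇑(FourierMin.F (M:ℝ))) n * e (n * y) := by
      intro n
      rw [smul_eq_mul, fourier_coe_apply]
      congr 1
      unfold e
      congr 1
      push_cast
      ring
    calc (((if |y - round y| = 0 then (1 : ℝ)
          else min 1 (1 / (M * |y - round y|))) : ℝ) : ℂ)
        = FourierMin.F (M:ℝ) (y : AddCircle (1:ℝ)) := FourierMin.lhs_eq hm y
      _ = ∑' n : ℤ, fourierCoeff (⇑(FourierMin.F (M:ℝ))) n • fourier n ((y:ℝ) : AddCircle (1:ℝ)) :=
          htsum.symm
      _ = ∑' n : ℤ, fourierCoeff (⇑(FourierMin.F (M:ℝ))) n * e (n * y) := tsum_congr hterm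
  · intro n
    have h1 := FourierMin.norm_coeff_le hm n
    have hlog : (2:ℝ) + 2 * Real.log M ≤ 6 * Real.log M := by
      have h2 : Real.log 2 ≤ Real.log M := Real.log_le_log (by norm_num) hm
      have h3 : (0.6931471803:ℝ) < Real.log 2 := Real.log_two_gt_d9
      linarith
    calc ‖fourierCoeff (⇑(FourierMin.F (M:ℝ))) n‖
        ≤ (2 + 2 * Real.log M) / M := h1
      _ ≤ 6 * Real.log M / M := by
          gcongr
  · intro n hn
    exact FourierMin.norm_coeff_le2 hm hn
end
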